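/- arXiv:1806.06865 — 3 statements merged into one kernel-verified Lean document; each statement's English description precedes it below -/
import Mathlib

section
/- For every x ∈ ℝ³, ∫_0^1 ∫_{ℝ³} (2πσ)^{−3/2} e^{−‖y−x‖²/(2σ)} ‖y‖^{−3/2} dy dσ ≤ 4 · 2^{1/4} π^{−1/2} Γ(3/4); in particular sup_{x∈ℝ³} ∫_0^1 ∫_{ℝ³} (2πσ)^{−3/2} e^{−‖y−x‖²/(2σ)} ‖y‖^{−3/2} dy dσ < ∞. (This expresses the finiteness of sup_x E^{P_x}[∫_0^1 ‖ω(s)‖^{−3/2} ds] for three-dimensional Brownian motion started at x.) -/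
open MeasureTheory Real Set
open scoped ENNReal

noncomputable section

local notation "E3" => EuclideanSpace ℝ (Fin 3)

lemma gaussIntegrable0 {p : ℝ} (hp : 0 < p) :
    Integrable (fun y : E3 => Real.exp (-p * ‖y‖ ^ 2)) := by
  have h := (GaussianFourier.integrable_cexp_neg_mul_sq_norm_add (V := E3) (b := (p : ℂ))
    (by simpa using hp) 0 0).norm
  refine h.congr (Filter.Eventually.of_forall fun y => ?_)
  simp [Complex.norm_exp]
  left; norm_cast

lemma gaussValue0 {p : ℝ} (hp : 0 < p) :
    (∫ y : E3, Real.exp (-p * ‖y‖ ^ 2)) = (π / p) ^ ((3 : ℝ) / 2) := by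
  rw [GaussianFourier.integral_rexp_neg_mul_sq_norm hp]
  norm_num [finrank_euclideanSpace]

-- completing the square
lemma completeSquare {a t : ℝ} (ha : 0 < a) (ht : 0 < t) (x y : E3) :
    -a * ‖y - x‖ ^ 2 - t * ‖y‖ ^ 2
      = -(a + t) * ‖y - (a / (a + t)) • x‖ ^ 2 - a * t / (a + t) * ‖x‖ ^ 2 := by
  have hat : a + t ≠ 0 := by positivity
  have h1 : ‖y - x‖ ^ 2 = ‖y‖ ^ 2 - 2 * inner ℝ y x + ‖x‖ ^ 2 := norm_sub_sq_real y x
  have h2 : ‖y - (a / (a + t)) • x‖ ^ 2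
      = ‖y‖ ^ 2 - 2 * (a / (a + t) * inner ℝ y x) + (a / (a + t)) ^ 2 * ‖x‖ ^ 2 := by
    rw [norm_sub_sq_real, real_inner_smul_right, norm_smul, Real.norm_eq_abs,
      abs_of_pos (by positivity), mul_pow]
  rw [h1, h2]
  field_simp
  ring

lemma gaussIntegrableShift {p : ℝ} (hp : 0 < p) (c : E3) :
    Integrable (fun y : E3 => Real.exp (-p * ‖y - c‖ ^ 2)) :=
  (gaussIntegrable0 hp).comp_sub_right c

lemma gaussValueShift {p : ℝ} (hp : 0 < p) (c : E3) :
    (∫ y : E3, Real.exp (-p * ‖y - c‖ ^ 2)) = (π / p) ^ ((3 : ℝ) / 2) := by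
  rw [integral_sub_right_eq_self (fun y : E3 => Real.exp (-p * ‖y‖ ^ 2)) c]
  exact gaussValue0 hp

lemma gaussIntegrable {a t : ℝ} (ha : 0 < a) (ht : 0 < t) (x : E3) :
    Integrable (fun y : E3 => Real.exp (-a * ‖y - x‖ ^ 2 - t * ‖y‖ ^ 2)) := by
  have h := ((gaussIntegrableShift (by positivity : (0:ℝ) < a + t)
    ((a / (a + t)) • x)).const_mul (Real.exp (-(a * t / (a + t) * ‖x‖ ^ 2))))
  refine h.congr (Filter.Eventually.of_forall fun y => ?_)
  dsimp only
  rw [← Real.exp_add, completeSquare ha ht x y]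
  ring_nf

lemma gaussValue {a t : ℝ} (ha : 0 < a) (ht : 0 < t) (x : E3) :
    (∫ y : E3, Real.exp (-a * ‖y - x‖ ^ 2 - t * ‖y‖ ^ 2))
      = (π / (a + t)) ^ ((3 : ℝ) / 2) * Real.exp (-(a * t / (a + t)) * ‖x‖ ^ 2) := by
  have h : ∀ y : E3, Real.exp (-a * ‖y - x‖ ^ 2 - t * ‖y‖ ^ 2)
      = Real.exp (-(a * t / (a + t) * ‖x‖ ^ 2)) *
        Real.exp (-(a + t) * ‖y - (a / (a + t)) • x‖ ^ 2) := by
    intro y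
    rw [← Real.exp_add, completeSquare ha ht x y]
    ring_nf
  simp_rw [h]
  rw [integral_const_mul, gaussValueShift (by positivity) ((a / (a + t)) • x)]
  ring_nf

lemma gammaIntegrable {a r : ℝ} (ha : 0 < a) (hr : 0 < r) :
    IntegrableOn (fun t : ℝ => t ^ (a - 1) * Real.exp (-(r * t))) (Ioi 0) := by
  have h := integrableOn_rpow_mul_exp_neg_mul_rpow (s := a - 1) (p := 1)
    (by linarith) one_pos hr
  refine h.congr_fun (fun x hx => ?_) measurableSet_Ioi
  dsimp only; rw [Real.rpow_one]; ring_nf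

lemma lintGamma {a r : ℝ} (ha : 0 < a) (hr : 0 < r) :
    ∫⁻ t in Ioi 0, ENNReal.ofReal (t ^ (a - 1) * Real.exp (-(r * t)))
      = ENNReal.ofReal ((1 / r) ^ a * Real.Gamma a) := by
  rw [← ofReal_integral_eq_lintegral_ofReal (gammaIntegrable ha hr)
      ((ae_restrict_iff' measurableSet_Ioi).2 (Filter.Eventually.of_forall
        (fun t ht => mul_nonneg (Real.rpow_nonneg (le_of_lt (mem_Ioi.mp ht)) _) (Real.exp_nonneg _)))),
    Real.integral_rpow_mul_exp_neg_mul_Ioi ha hr]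


lemma betaLint {b : ℝ} (hb : 0 < b) :
    ∫⁻ t in Ioi 0, ENNReal.ofReal (t ^ ((3:ℝ)/4 - 1) * (1 + b * t) ^ (-(3:ℝ)/2))
      = ENNReal.ofReal ((Real.Gamma (3/2))⁻¹ * Real.Gamma (3/4) ^ 2 * b ^ (-(3:ℝ)/4)) := by
  have hΓ : (0:ℝ) < Real.Gamma (3/2) := Real.Gamma_pos_of_pos (by norm_num)
  -- Step 1&2: rewrite the integrand as a double lintegral
  have step1 : ∫⁻ t in Ioi 0, ENNReal.ofReal (t ^ ((3:ℝ)/4 - 1) * (1 + b * t) ^ (-(3:ℝ)/2))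
      = ∫⁻ t in Ioi 0, ∫⁻ s in Ioi 0, ENNReal.ofReal
          ((Real.Gamma (3/2))⁻¹ * t ^ ((3:ℝ)/4 - 1) *
            (s ^ ((3:ℝ)/2 - 1) * (Real.exp (-s) * Real.exp (-(b * s * t))))) := by
    refine setLIntegral_congr_fun measurableSet_Ioi
      (fun t ht => ?_)
    have ht0 : 0 < t := mem_Ioi.mp ht
    have hr : 0 < 1 + b * t := by positivity
    have key : ENNReal.ofReal (t ^ ((3:ℝ)/4 - 1) * (1 + b * t) ^ (-(3:ℝ)/2))
        = ENNReal.ofReal ((Real.Gamma (3/2))⁻¹ * t ^ ((3:ℝ)/4 - 1)) *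
          ENNReal.ofReal ((1 / (1 + b * t)) ^ ((3:ℝ)/2) * Real.Gamma (3/2)) := by
      rw [← ENNReal.ofReal_mul (by positivity)]
      congr 1
      have e1 : (1 / (1 + b * t)) ^ ((3:ℝ)/2) = (1 + b * t) ^ (-(3:ℝ)/2) := by
        have h2 : (-(3:ℝ)/2) = -((3:ℝ)/2) := by norm_num
        rw [h2, Real.rpow_neg hr.le, one_div, Real.inv_rpow hr.le]
      rw [e1]
      field_simp
    rw [key, ← lintGamma (by norm_num : (0:ℝ) < 3/2) hr,
      ← lintegral_const_mul' _ _ ENNReal.ofReal_ne_top]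
    refine setLIntegral_congr_fun measurableSet_Ioi
      (fun s hs => ?_)
    have hs0 : 0 < s := mem_Ioi.mp hs
    rw [← ENNReal.ofReal_mul (by positivity)]
    congr 1
    rw [show -((1 + b * t) * s) = -s + -(b * s * t) by ring, Real.exp_add]
  rw [step1]
  -- Step 3: swap
  rw [lintegral_lintegral_swap (by fun_prop)]
  -- Step 4: compute the inner t-integral
  have step4 : ∀ s ∈ Ioi (0:ℝ),
      (∫⁻ t in Ioi 0, ENNReal.ofReal
          ((Real.Gamma (3/2))⁻¹ * t ^ ((3:ℝ)/4 - 1) *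
            (s ^ ((3:ℝ)/2 - 1) * (Real.exp (-s) * Real.exp (-(b * s * t))))))
        = ENNReal.ofReal (((Real.Gamma (3/2))⁻¹ * Real.Gamma (3/4) * b ^ (-(3:ℝ)/4)) *
            (s ^ ((3:ℝ)/4 - 1) * Real.exp (-(1 * s)))) := by
    intro s hs
    have hs0 : 0 < s := mem_Ioi.mp hs
    have hbs : 0 < b * s := by positivity
    have e2 : ∀ t ∈ Ioi (0:ℝ), ENNReal.ofReal
          ((Real.Gamma (3/2))⁻¹ * t ^ ((3:ℝ)/4 - 1) *
            (s ^ ((3:ℝ)/2 - 1) * (Real.exp (-s) * Real.exp (-(b * s * t)))))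
        = ENNReal.ofReal ((Real.Gamma (3/2))⁻¹ * (s ^ ((3:ℝ)/2 - 1) * Real.exp (-s))) *
          ENNReal.ofReal (t ^ ((3:ℝ)/4 - 1) * Real.exp (-(b * s * t))) := by
      intro t ht
      have ht0 : 0 < t := mem_Ioi.mp ht
      rw [← ENNReal.ofReal_mul (by positivity)]
      congr 1
      ring
    calc _ = ∫⁻ t in Ioi 0,
          ENNReal.ofReal ((Real.Gamma (3/2))⁻¹ * (s ^ ((3:ℝ)/2 - 1) * Real.exp (-s))) *
          ENNReal.ofReal (t ^ ((3:ℝ)/4 - 1) * Real.exp (-(b * s * t))) :=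
        setLIntegral_congr_fun measurableSet_Ioi e2
      _ = ENNReal.ofReal ((Real.Gamma (3/2))⁻¹ * (s ^ ((3:ℝ)/2 - 1) * Real.exp (-s))) *
          ∫⁻ t in Ioi 0, ENNReal.ofReal (t ^ ((3:ℝ)/4 - 1) * Real.exp (-(b * s * t))) :=
        lintegral_const_mul' _ _ ENNReal.ofReal_ne_top
      _ = ENNReal.ofReal ((Real.Gamma (3/2))⁻¹ * (s ^ ((3:ℝ)/2 - 1) * Real.exp (-s))) *
          ENNReal.ofReal ((1 / (b * s)) ^ ((3:ℝ)/4) * Real.Gamma (3/4)) := by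
        rw [← lintGamma (by norm_num : (0:ℝ) < 3/4) hbs]
      _ = _ := by
        rw [← ENNReal.ofReal_mul (by positivity)]
        congr 1
        have e3 : (1 / (b * s)) ^ ((3:ℝ)/4) = b ^ (-(3:ℝ)/4) * s ^ (-(3:ℝ)/4) := by
          have h2 : (-(3:ℝ)/4) = -((3:ℝ)/4) := by norm_num
          rw [one_div, mul_inv, Real.mul_rpow (by positivity) (by positivity), h2,
            Real.rpow_neg hb.le, Real.rpow_neg hs0.le, Real.inv_rpow hb.le,
            Real.inv_rpow hs0.le]
        rw [e3]
        have e4 : s ^ ((3:ℝ)/2 - 1) * s ^ (-(3:ℝ)/4) = s ^ ((3:ℝ)/4 - 1) := by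
          rw [← Real.rpow_add hs0]; norm_num
        have e5 : Real.exp (-(1 * s)) = Real.exp (-s) := by norm_num
        rw [e5, ← e4]
        ring
  rw [setLIntegral_congr_fun measurableSet_Ioi step4]
  -- Step 5: the remaining s-integral
  have step5 : ∀ x ∈ Ioi (0:ℝ),
      ENNReal.ofReal (((Real.Gamma (3/2))⁻¹ * Real.Gamma (3/4) * b ^ (-(3:ℝ)/4)) *
          (x ^ ((3:ℝ)/4 - 1) * Real.exp (-(1 * x))))
        = ENNReal.ofReal ((Real.Gamma (3/2))⁻¹ * Real.Gamma (3/4) * b ^ (-(3:ℝ)/4)) *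
          ENNReal.ofReal (x ^ ((3:ℝ)/4 - 1) * Real.exp (-(1 * x))) :=
    fun x hx => ENNReal.ofReal_mul (by positivity)
  rw [setLIntegral_congr_fun measurableSet_Ioi step5,
    lintegral_const_mul' _ _ ENNReal.ofReal_ne_top,
    lintGamma (by norm_num : (0:ℝ) < 3/4) one_pos,
    ← ENNReal.ofReal_mul (by positivity)]
  congr 1
  rw [show (1:ℝ)/1 = 1 by norm_num, Real.one_rpow]
  ring
lemma ae_ne_zero_E3 : ∀ᵐ (y : EuclideanSpace ℝ (Fin 3)), y ≠ 0 := by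
  refine ae_iff.mpr ?_
  have : {y : EuclideanSpace ℝ (Fin 3) | ¬ y ≠ 0} = {0} := by ext y; simp
  rw [this]
  exact measure_singleton 0

set_option maxHeartbeats 2000000 in
lemma innerBound {σ : ℝ} (hσ : 0 < σ) (x : E3) :
    (∫ y : E3, (2 * π * σ) ^ (-(3:ℝ)/2) * Real.exp (-‖y - x‖ ^ 2 / (2 * σ)) *
        ‖y‖ ^ (-(3:ℝ)/2))
      ≤ (2:ℝ) ^ ((1:ℝ)/4) * π ^ (-(1:ℝ)/2) * Real.Gamma (3/4) * σ ^ (-(3:ℝ)/4) := by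
  have h2σ : (0:ℝ) < 2 * σ := by positivity
  set a : ℝ := (2*σ)⁻¹ with ha_def
  have ha : 0 < a := by positivity
  have hC : (0:ℝ) < (2*π*σ) ^ (-(3:ℝ)/2) := Real.rpow_pos_of_pos (by positivity) _
  set C : ℝ := (2*π*σ) ^ (-(3:ℝ)/2) with hC_def
  have hΓ34 : (0:ℝ) < Real.Gamma (3/4) := Real.Gamma_pos_of_pos (by norm_num)
  have hΓ32 : (0:ℝ) < Real.Gamma (3/2) := Real.Gamma_pos_of_pos (by norm_num)
  have hexp : ∀ y : E3, Real.exp (-‖y - x‖^2 / (2*σ)) = Real.exp (-a * ‖y - x‖^2) := by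
    intro y; rw [ha_def]; congr 1; field_simp
  rw [integral_eq_lintegral_of_nonneg_ae
    (Filter.Eventually.of_forall (fun y => by positivity))
    (Measurable.aestronglyMeasurable (by measurability))]
  refine ENNReal.toReal_le_of_le_ofReal (by positivity) ?_
  have key : ∫⁻ y : E3, ENNReal.ofReal (C * Real.exp (-‖y - x‖^2 / (2*σ)) * ‖y‖ ^ (-(3:ℝ)/2))
      ≤ ENNReal.ofReal ((Real.Gamma (3/4))⁻¹) *
        ENNReal.ofReal ((Real.Gamma (3/2))⁻¹ * Real.Gamma (3/4) ^ 2 * (2*σ) ^ (-(3:ℝ)/4)) := by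
    calc ∫⁻ y : E3, ENNReal.ofReal (C * Real.exp (-‖y - x‖^2 / (2*σ)) * ‖y‖ ^ (-(3:ℝ)/2))
        = ∫⁻ y : E3, ENNReal.ofReal ((Real.Gamma (3/4))⁻¹) *
            ∫⁻ t in Ioi 0, ENNReal.ofReal (C * t ^ ((3:ℝ)/4 - 1) *
              Real.exp (-a * ‖y - x‖^2 - t * ‖y‖^2)) := by
          refine lintegral_congr_ae ?_
          filter_upwards [ae_ne_zero_E3] with y hy
          have hn : (0:ℝ) < ‖y‖ := norm_pos_iff.mpr hy
          have hn2 : (0:ℝ) < ‖y‖^2 := by positivity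
          have e1 : ∀ t : ℝ, ENNReal.ofReal (C * t ^ ((3:ℝ)/4 - 1) *
                Real.exp (-a * ‖y - x‖^2 - t * ‖y‖^2))
              = ENNReal.ofReal (C * Real.exp (-a * ‖y - x‖^2)) *
                ENNReal.ofReal (t ^ ((3:ℝ)/4 - 1) * Real.exp (-(‖y‖^2 * t))) := by
            intro t
            rw [← ENNReal.ofReal_mul (by positivity)]
            congr 1
            rw [show -a * ‖y - x‖^2 - t * ‖y‖^2 = -a * ‖y - x‖^2 + -(‖y‖^2 * t) by ring,
              Real.exp_add]
            ring
          simp_rw [e1]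
          rw [lintegral_const_mul' _ _ ENNReal.ofReal_ne_top,
            lintGamma (by norm_num : (0:ℝ) < 3/4) hn2,
            ← ENNReal.ofReal_mul (by positivity), ← ENNReal.ofReal_mul (by positivity)]
          congr 1
          have e2 : (1 / ‖y‖^2) ^ ((3:ℝ)/4) = ‖y‖ ^ (-(3:ℝ)/2) := by
            rw [one_div, ← Real.rpow_natCast ‖y‖ 2, ← Real.rpow_neg hn.le,
              ← Real.rpow_mul hn.le]
            norm_num
          rw [hexp y, e2]
          field_simp
      _ = ENNReal.ofReal ((Real.Gamma (3/4))⁻¹) *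
            ∫⁻ y : E3, ∫⁻ t in Ioi 0, ENNReal.ofReal (C * t ^ ((3:ℝ)/4 - 1) *
              Real.exp (-a * ‖y - x‖^2 - t * ‖y‖^2)) :=
          lintegral_const_mul' _ _ ENNReal.ofReal_ne_top
      _ = ENNReal.ofReal ((Real.Gamma (3/4))⁻¹) *
            ∫⁻ t in Ioi 0, ∫⁻ y : E3, ENNReal.ofReal (C * t ^ ((3:ℝ)/4 - 1) *
              Real.exp (-a * ‖y - x‖^2 - t * ‖y‖^2)) := by
          rw [lintegral_lintegral_swap (by fun_prop)]
      _ ≤ ENNReal.ofReal ((Real.Gamma (3/4))⁻¹) *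
            ∫⁻ t in Ioi 0, ENNReal.ofReal (t ^ ((3:ℝ)/4 - 1) * (1 + 2*σ*t) ^ (-(3:ℝ)/2)) := by
          refine mul_le_mul_right ?_ _
          refine setLIntegral_mono_ae (by fun_prop) (Filter.Eventually.of_forall
            (fun t ht => ?_))
          have ht0 : (0:ℝ) < t := mem_Ioi.mp ht
          have hint : Integrable (fun y : E3 => C * t ^ ((3:ℝ)/4 - 1) *
              Real.exp (-a * ‖y - x‖^2 - t * ‖y‖^2)) :=
            (gaussIntegrable ha ht0 x).const_mul _
          rw [← ofReal_integral_eq_lintegral_ofReal hint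
            (Filter.Eventually.of_forall (fun y => by positivity)),
            integral_const_mul, gaussValue ha ht0 x]
          refine ENNReal.ofReal_le_ofReal ?_
          have hkey : C * (π/(a+t)) ^ ((3:ℝ)/2) = (1 + 2*σ*t) ^ (-(3:ℝ)/2) := by
            have hat : (0:ℝ) < a + t := by positivity
            have h1 : (0:ℝ) < 1 + 2*σ*t := by positivity
            rw [hC_def, show (-(3:ℝ)/2) = -((3:ℝ)/2) by norm_num,
              Real.rpow_neg (by positivity), Real.rpow_neg h1.le,
              ← Real.inv_rpow (by positivity), ← Real.inv_rpow h1.le,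
              ← Real.mul_rpow (by positivity) (by positivity)]
            congr 1
            rw [ha_def]
            field_simp
          have hexp1 : Real.exp (-(a * t / (a + t)) * ‖x‖ ^ 2) ≤ 1 := by
            rw [Real.exp_le_one_iff]
            have : (0:ℝ) ≤ a * t / (a + t) * ‖x‖ ^ 2 := by positivity
            linarith
          calc C * t ^ ((3:ℝ)/4 - 1) *
                ((π/(a+t)) ^ ((3:ℝ)/2) * Real.exp (-(a * t / (a + t)) * ‖x‖ ^ 2))
              ≤ C * t ^ ((3:ℝ)/4 - 1) * ((π/(a+t)) ^ ((3:ℝ)/2) * 1) := by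
                have h0 : (0:ℝ) ≤ C * t ^ ((3:ℝ)/4 - 1) := by positivity
                have h1 : (0:ℝ) ≤ (π/(a+t)) ^ ((3:ℝ)/2) := by positivity
                exact mul_le_mul_of_nonneg_left
                  (mul_le_mul_of_nonneg_left hexp1 h1) h0
            _ = t ^ ((3:ℝ)/4 - 1) * (1 + 2*σ*t) ^ (-(3:ℝ)/2) := by
                rw [mul_one, ← hkey]; ring
      _ = ENNReal.ofReal ((Real.Gamma (3/4))⁻¹) *
            ENNReal.ofReal ((Real.Gamma (3/2))⁻¹ * Real.Gamma (3/4) ^ 2 * (2*σ) ^ (-(3:ℝ)/4)) := by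
          rw [betaLint h2σ]
  refine key.trans ?_
  rw [← ENNReal.ofReal_mul (by positivity)]
  refine ENNReal.ofReal_le_ofReal (le_of_eq ?_)
  have hG32 : Real.Gamma (3/2) = (1/2) * Real.sqrt π := by
    rw [show (3:ℝ)/2 = 1/2 + 1 by norm_num, Real.Gamma_add_one (by norm_num),
      Real.Gamma_one_half_eq]
  have hsqrt : Real.sqrt π = π ^ ((1:ℝ)/2) := Real.sqrt_eq_rpow π
  have h2 : ((2:ℝ)*σ) ^ (-(3:ℝ)/4) = (2:ℝ) ^ (-(3:ℝ)/4) * σ ^ (-(3:ℝ)/4) := by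
    rw [show (-(3:ℝ)/4) = -((3:ℝ)/4) by norm_num, Real.rpow_neg (by positivity),
      Real.rpow_neg (by norm_num), Real.rpow_neg hσ.le,
      Real.mul_rpow (by norm_num) hσ.le, mul_inv]
  have h3 : (2:ℝ) * (2:ℝ) ^ (-(3:ℝ)/4) = (2:ℝ) ^ ((1:ℝ)/4) := by
    nth_rewrite 1 [show (2:ℝ) = (2:ℝ) ^ (1:ℝ) by rw [Real.rpow_one]]
    rw [← Real.rpow_add (by norm_num : (0:ℝ) < 2)]
    norm_num
  have h4 : (π ^ ((1:ℝ)/2) : ℝ)⁻¹ = π ^ (-(1:ℝ)/2) := by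
    rw [show (-(1:ℝ)/2) = -((1:ℝ)/2) by norm_num, Real.rpow_neg pi_pos.le]
  rw [hG32, hsqrt, h2, ← h3, ← h4]
  have hp : (π ^ ((1:ℝ)/2) : ℝ) ≠ 0 := (Real.rpow_pos_of_pos pi_pos _).ne'
  field_simp

lemma rpow_int_Ioc : ∫ σ in Ioc (0:ℝ) 1, σ ^ (-(3:ℝ)/4) = 4 := by
  rw [← intervalIntegral.integral_of_le zero_le_one,
    integral_rpow (Or.inl (by norm_num))]
  rw [Real.one_rpow, Real.zero_rpow (by norm_num)]
  norm_num

/-- Uniform bound in the starting point `x` for the expected time integral over `[0,1]` of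
`‖ω(s)‖^{-3/2}` along three-dimensional Brownian motion started at `x`, expressed through the
Gaussian heat kernel; in particular the supremum over `x` is finite. -/
theorem brownian_expected_inverse_norm_integral_bounded :
    (∀ x : EuclideanSpace ℝ (Fin 3),
      (∫ σ in Set.Ioc (0 : ℝ) 1, ∫ y : EuclideanSpace ℝ (Fin 3),
          (2 * Real.pi * σ) ^ (-(3 : ℝ) / 2) * Real.exp (-‖y - x‖ ^ 2 / (2 * σ)) *
            ‖y‖ ^ (-(3 : ℝ) / 2))
        ≤ 4 * ((2 : ℝ) ^ ((1 : ℝ) / 4) * Real.pi ^ (-(1 : ℝ) / 2) * Real.Gamma (3 / 4))) ∧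
    BddAbove (Set.range fun x : EuclideanSpace ℝ (Fin 3) =>
      ∫ σ in Set.Ioc (0 : ℝ) 1, ∫ y : EuclideanSpace ℝ (Fin 3),
          (2 * Real.pi * σ) ^ (-(3 : ℝ) / 2) * Real.exp (-‖y - x‖ ^ 2 / (2 * σ)) *
            ‖y‖ ^ (-(3 : ℝ) / 2)) := by
  have hbound : ∀ x : EuclideanSpace ℝ (Fin 3),
      (∫ σ in Set.Ioc (0 : ℝ) 1, ∫ y : EuclideanSpace ℝ (Fin 3),
          (2 * Real.pi * σ) ^ (-(3 : ℝ) / 2) * Real.exp (-‖y - x‖ ^ 2 / (2 * σ)) *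
            ‖y‖ ^ (-(3 : ℝ) / 2))
        ≤ 4 * ((2 : ℝ) ^ ((1 : ℝ) / 4) * Real.pi ^ (-(1 : ℝ) / 2) * Real.Gamma (3 / 4)) := by
    intro x
    have hgi : IntegrableOn (fun σ : ℝ =>
        (2:ℝ) ^ ((1:ℝ)/4) * π ^ (-(1:ℝ)/2) * Real.Gamma (3/4) * σ ^ (-(3:ℝ)/4))
        (Ioc (0:ℝ) 1) := by
      have h1 : IntervalIntegrable (fun σ : ℝ => σ ^ (-(3:ℝ)/4)) volume 0 1 :=
        intervalIntegral.intervalIntegrable_rpow' (by norm_num)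
      have h2 := (intervalIntegrable_iff_integrableOn_Ioc_of_le zero_le_one).mp h1
      simpa [mul_assoc, IntegrableOn] using h2.const_mul
        ((2:ℝ) ^ ((1:ℝ)/4) * π ^ (-(1:ℝ)/2) * Real.Gamma (3/4))
    have hmono := integral_mono_of_nonneg
      (f := fun σ : ℝ => ∫ y : EuclideanSpace ℝ (Fin 3),
          (2 * Real.pi * σ) ^ (-(3 : ℝ) / 2) * Real.exp (-‖y - x‖ ^ 2 / (2 * σ)) *
            ‖y‖ ^ (-(3 : ℝ) / 2))
      (g := fun σ : ℝ =>
        (2:ℝ) ^ ((1:ℝ)/4) * π ^ (-(1:ℝ)/2) * Real.Gamma (3/4) * σ ^ (-(3:ℝ)/4))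
      (μ := volume.restrict (Ioc (0:ℝ) 1))
      ((ae_restrict_iff' measurableSet_Ioc).2 (Filter.Eventually.of_forall
        (fun σ hσ => integral_nonneg (fun y => by
          have h0 : (0:ℝ) < σ := hσ.1
          positivity))))
      hgi
      ((ae_restrict_iff' measurableSet_Ioc).2 (Filter.Eventually.of_forall
        (fun σ hσ => innerBound hσ.1 x)))
    refine hmono.trans (le_of_eq ?_)
    rw [show (fun σ : ℝ =>
        (2:ℝ) ^ ((1:ℝ)/4) * π ^ (-(1:ℝ)/2) * Real.Gamma (3/4) * σ ^ (-(3:ℝ)/4))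
      = (fun σ : ℝ => ((2:ℝ) ^ ((1:ℝ)/4) * π ^ (-(1:ℝ)/2) * Real.Gamma (3/4)) *
          σ ^ (-(3:ℝ)/4)) from rfl, integral_const_mul, rpow_int_Ioc]
    ring
  exact ⟨hbound, ⟨_, fun v hv => by obtain ⟨x, rfl⟩ := hv; exact hbound x⟩⟩

end
end

section
/- Let X be a Polish space, d ≥ 1, and let ν be a Borel probability measure on X. Suppose (μ_n) is a sequence of Borel probability measures on X × ℝ^d, each with X-marginal equal to ν, and suppose μ_n converges wea-guely to a finite Borel measure μ on X × ℝ^d. Then the X-marginal of μ is dominated by ν, i.e. μ(A × ℝ^d) ≤ ν(A) for every Borel set A ⊆ X. -/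
open MeasureTheory Filter Topology

/-- If probability measures `μ_n` on `X × ℝ^d` all have `X`-marginal `ν` and converge
wea-guely to a finite measure `μ`, then the `X`-marginal of `μ` is dominated by `ν`. -/
theorem weague_limit_marginal_dominated (X : Type*) [TopologicalSpace X] [PolishSpace X]
    [MeasurableSpace X] [BorelSpace X] (d : ℕ) (hd : 1 ≤ d)
    (ν : Measure X) [IsProbabilityMeasure ν]
    (μn : ℕ → Measure (X × EuclideanSpace ℝ (Fin d)))
    (hprob : ∀ n, IsProbabilityMeasure (μn n))
    (hmarg : ∀ n, (μn n).map Prod.fst = ν)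
    (μ : Measure (X × EuclideanSpace ℝ (Fin d))) [IsFiniteMeasure μ]
    (hconv : ∀ F : X × EuclideanSpace ℝ (Fin d) → ℝ, Continuous F →
      (∃ M : ℝ, ∀ p, |F p| ≤ M) →
      (∀ δ : ℝ, 0 < δ → ∃ R : ℝ, ∀ (x : X) (a : EuclideanSpace ℝ (Fin d)),
        R ≤ ‖a‖ → |F (x, a)| ≤ δ) →
      Filter.Tendsto (fun n => ∫ p, F p ∂(μn n)) atTop (𝓝 (∫ p, F p ∂μ))) :
    ∀ A : Set X, MeasurableSet A →
      μ (A ×ˢ (Set.univ : Set (EuclideanSpace ℝ (Fin d)))) ≤ ν A := by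
  letI := TopologicalSpace.upgradeIsCompletelyMetrizable X
  set E := EuclideanSpace ℝ (Fin d)
  -- the cutoff in the `a` variable
  set g : ℕ → E → ℝ := fun n a => min 1 (max 0 ((n : ℝ) + 1 - ‖a‖)) with hg
  have hg_cont : ∀ n, Continuous (g n) :=
    fun n => continuous_const.min (continuous_const.max
      (continuous_const.sub continuous_norm))
  have hg_nonneg : ∀ n a, 0 ≤ g n a := fun n a => le_min zero_le_one (le_max_left 0 _)
  have hg_le_one : ∀ n a, g n a ≤ 1 := fun n a => min_le_left _ _
  have hg_mono : ∀ a, Monotone fun n => g n a := by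
    intro a m n hmn
    refine min_le_min le_rfl (max_le_max le_rfl ?_)
    have : (m : ℝ) ≤ n := Nat.cast_le.mpr hmn
    linarith
  have hg_tendsto : ∀ a : E, Tendsto (fun n => g n a) atTop (𝓝 1) := by
    intro a
    have : ∀ᶠ n : ℕ in atTop, g n a = 1 := by
      filter_upwards [eventually_ge_atTop ⌈‖a‖⌉₊] with n hn
      have h1 : ‖a‖ ≤ (n : ℝ) := le_trans (Nat.le_ceil _) (Nat.cast_le.mpr hn)
      have : (1 : ℝ) ≤ max 0 ((n : ℝ) + 1 - ‖a‖) := le_max_of_le_right (by linarith)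
      simp [hg, min_eq_left this]
    exact Tendsto.congr' (this.mono fun n h => h.symm) tendsto_const_nhds
  -- the main estimate for open sets
  have key : ∀ U : Set X, IsOpen U → μ (Prod.fst ⁻¹' U) ≤ ν U := by
    intro U hU
    -- the cutoff in the `x` variable
    obtain ⟨f, hf_cont, hf_nonneg, hf_le, hf_mono, hf_tendsto⟩ :
        ∃ f : ℕ → X → ℝ, (∀ n, Continuous (f n)) ∧ (∀ n x, 0 ≤ f n x) ∧
          (∀ n x, f n x ≤ Set.indicator U (1 : X → ℝ) x) ∧ (∀ x, Monotone fun n => f n x) ∧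
          (∀ x, Tendsto (fun n => f n x) atTop (𝓝 (Set.indicator U (1 : X → ℝ) x))) := by
      rcases eq_or_ne Uᶜ ∅ with hUc | hUc
      · have hUuniv : U = Set.univ := by
          rw [← Set.compl_empty_iff]; exact hUc
        refine ⟨fun _ _ => 1, fun _ => continuous_const, fun _ _ => zero_le_one,
          fun n x => ?_, fun x _ _ _ => le_rfl, fun x => ?_⟩
        · simp [hUuniv]
        · simp [hUuniv]
      · have hne : (Uᶜ).Nonempty := Set.nonempty_iff_ne_empty.mpr hUc
        refine ⟨fun n x => min 1 ((n : ℝ) * Metric.infDist x Uᶜ),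
          fun n => continuous_const.min (continuous_const.mul
            (Metric.continuous_infDist_pt _)), fun n x => le_min zero_le_one
            (mul_nonneg (Nat.cast_nonneg n) Metric.infDist_nonneg), ?_, ?_, ?_⟩
        · intro n x
          by_cases hx : x ∈ U
          · simpa [Set.indicator_of_mem hx] using min_le_left _ _
          · have : Metric.infDist x Uᶜ = 0 := Metric.infDist_zero_of_mem hx
            simp [Set.indicator_of_notMem hx, this]
        · intro x m n hmn
          exact min_le_min le_rfl (mul_le_mul_of_nonneg_right (Nat.cast_le.mpr hmn)
            Metric.infDist_nonneg)
        · intro x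
          by_cases hx : x ∈ U
          · have hpos : 0 < Metric.infDist x Uᶜ :=
              (hU.isClosed_compl.notMem_iff_infDist_pos hne).1 (by simpa using hx)
            have : ∀ᶠ n : ℕ in atTop, min 1 ((n : ℝ) * Metric.infDist x Uᶜ) = 1 := by
              filter_upwards [eventually_ge_atTop ⌈(Metric.infDist x Uᶜ)⁻¹⌉₊] with n hn
              have h1 : (Metric.infDist x Uᶜ)⁻¹ ≤ (n : ℝ) :=
                le_trans (Nat.le_ceil _) (Nat.cast_le.mpr hn)
              have : (1 : ℝ) ≤ (n : ℝ) * Metric.infDist x Uᶜ := by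
                rw [← inv_mul_cancel₀ hpos.ne']
                exact mul_le_mul_of_nonneg_right h1 Metric.infDist_nonneg
              simp [min_eq_left this]
            rw [Set.indicator_of_mem hx]
            exact Tendsto.congr' (this.mono fun n h => h.symm) tendsto_const_nhds
          · have : Metric.infDist x Uᶜ = 0 := Metric.infDist_zero_of_mem hx
            simp [Set.indicator_of_notMem hx, this]
    -- the combined test functions
    set F : ℕ → X × E → ℝ := fun n p => f n p.1 * g n p.2 with hF
    have hF_cont : ∀ n, Continuous (F n) :=
      fun n => ((hf_cont n).comp continuous_fst).mul ((hg_cont n).comp continuous_snd)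
    have hind_le : ∀ n x, f n x ≤ 1 := by
      intro n x
      refine le_trans (hf_le n x) ?_
      by_cases hx : x ∈ U <;> simp [hx]
    have hF_nonneg : ∀ n p, 0 ≤ F n p := fun n p => mul_nonneg (hf_nonneg _ _) (hg_nonneg _ _)
    have hF_le_one : ∀ n p, F n p ≤ 1 := fun n p =>
      mul_le_one₀ (hind_le n p.1) (hg_nonneg _ _) (hg_le_one _ _)
    have hF_le_ind : ∀ n (p : X × E), F n p ≤ Set.indicator U (1 : X → ℝ) p.1 := by
      intro n p
      calc F n p ≤ f n p.1 * 1 :=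
            mul_le_mul_of_nonneg_left (hg_le_one _ _) (hf_nonneg _ _)
        _ = f n p.1 := mul_one _
        _ ≤ Set.indicator U (1 : X → ℝ) p.1 := hf_le n p.1
    have hF_abs : ∀ n p, |F n p| ≤ 1 := fun n p =>
      abs_le.mpr ⟨le_trans (by norm_num) (hF_nonneg n p), hF_le_one n p⟩
    -- integrability
    have hF_int : ∀ n (m : Measure (X × E)), IsFiniteMeasure m → Integrable (F n) m := by
      intro n m hm
      exact (integrable_const (1 : ℝ)).mono' (hF_cont n).aestronglyMeasurable
        (Filter.Eventually.of_forall fun p => by simpa using hF_abs n p)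
    have hUm : MeasurableSet U := hU.measurableSet
    have hind_meas : Measurable (Set.indicator U (1 : X → ℝ)) :=
      measurable_one.indicator hUm
    have hind_int : ∀ (m : Measure (X × E)), IsFiniteMeasure m →
        Integrable (fun p : X × E => Set.indicator U (1 : X → ℝ) p.1) m := by
      intro m hm
      refine (integrable_const (1 : ℝ)).mono'
        ((hind_meas.comp measurable_fst).aestronglyMeasurable)
        (Filter.Eventually.of_forall fun p => ?_)
      by_cases hx : p.1 ∈ U <;> simp [hx]
    -- ∫ F n dμ_k ≤ ν U
    have hbound : ∀ n k, ∫ p, F n p ∂(μn k) ≤ (ν U).toReal := by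
      intro n k
      have h1 : ∫ p, F n p ∂(μn k) ≤ ∫ p : X × E, Set.indicator U (1 : X → ℝ) p.1 ∂(μn k) :=
        integral_mono (hF_int n _ (by haveI := hprob k; infer_instance))
          (hind_int _ (by haveI := hprob k; infer_instance)) (hF_le_ind n)
      have h2 : ∫ p : X × E, Set.indicator U (1 : X → ℝ) p.1 ∂(μn k)
          = ∫ x, Set.indicator U (1 : X → ℝ) x ∂ν := by
        rw [← hmarg k, integral_map measurable_fst.aemeasurable
          hind_meas.aestronglyMeasurable]
      rw [h2, integral_indicator_one hUm] at h1
      exact h1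
    -- pass to the limit in k
    have hlim : ∀ n, ∫ p, F n p ∂μ ≤ (ν U).toReal := by
      intro n
      refine le_of_tendsto (hconv (F n) (hF_cont n) ⟨1, hF_abs n⟩ ?_)
        (Filter.Eventually.of_forall (hbound n))
      intro δ hδ
      refine ⟨(n : ℝ) + 1, fun x a ha => ?_⟩
      have hg0 : g n a = 0 := by
        have : max 0 ((n : ℝ) + 1 - ‖a‖) = 0 := max_eq_left (by linarith)
        simp [hg, this, min_eq_right (zero_le_one)]
      simp only [hF, hg0, mul_zero, abs_zero]
      exact hδ.le
    -- monotone convergence for μ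
    have hmono : ∀ p : X × E, Monotone fun n => F n p := by
      intro p m n hmn
      exact mul_le_mul (hf_mono p.1 hmn) (hg_mono p.2 hmn) (hg_nonneg m p.2)
        (le_trans (hf_nonneg n p.1) le_rfl)
    have htend : ∀ p : X × E, Tendsto (fun n => F n p) atTop
        (𝓝 (Set.indicator (Prod.fst ⁻¹' U) 1 p)) := by
      intro p
      have : Set.indicator (Prod.fst ⁻¹' U) (1 : X × E → ℝ) p
          = Set.indicator U (1 : X → ℝ) p.1 * 1 := by
        by_cases hx : p.1 ∈ U <;> simp [hx]
      rw [this]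
      exact (hf_tendsto p.1).mul (hg_tendsto p.2)
    have hind_int' : Integrable (Set.indicator (Prod.fst ⁻¹' U) (1 : X × E → ℝ)) μ := by
      refine (integrable_const (1 : ℝ)).mono'
        ((measurable_one.indicator (measurable_fst hUm)).aestronglyMeasurable)
        (Filter.Eventually.of_forall fun p => ?_)
      by_cases hx : p.1 ∈ U <;> simp [Set.indicator, hx]
    have hMCT : Tendsto (fun n => ∫ p, F n p ∂μ) atTop
        (𝓝 (∫ p, Set.indicator (Prod.fst ⁻¹' U) (1 : X × E → ℝ) p ∂μ)) :=
      integral_tendsto_of_tendsto_of_monotone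
        (fun n => hF_int n μ inferInstance) hind_int'
        (Filter.Eventually.of_forall hmono) (Filter.Eventually.of_forall htend)
    have hfin : ∫ p, Set.indicator (Prod.fst ⁻¹' U) (1 : X × E → ℝ) p ∂μ
        = (μ (Prod.fst ⁻¹' U)).toReal :=
      integral_indicator_one (measurable_fst hUm)
    have hfinal : (μ (Prod.fst ⁻¹' U)).toReal ≤ (ν U).toReal := by
      rw [← hfin]
      exact le_of_tendsto hMCT (Filter.Eventually.of_forall hlim)
    have h1 : μ (Prod.fst ⁻¹' U) ≠ ⊤ := measure_ne_top μ _
    have h2 : ν U ≠ ⊤ := measure_ne_top ν _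
    exact (ENNReal.toReal_le_toReal h1 h2).mp hfinal
  -- conclude by outer regularity of ν
  intro A hA
  rw [Set.prod_univ, Set.measure_eq_iInf_isOpen A ν]
  refine le_iInf fun U => le_iInf fun hAU => le_iInf fun hUo => ?_
  exact le_trans (measure_mono (Set.preimage_mono hAU)) (key U hUo)
end

section
/- Let (B_t)_{t∈[0,1]} be a standard one-dimensional Brownian motion with almost surely continuous paths, and define the 1/4-Hölder seminorm ‖ω*‖ = sup_{0 ≤ s < t ≤ 1} |B_t − B_s| / (t − s)^{1/4}. Then there exist constants C₁, C₂ ∈ (0, ∞) such that P(‖ω*‖ > λ) ≤ C₁ exp(−λ²/(2C₂)) for all λ > 0, and consequently E[exp(‖ω*‖)] < ∞. -/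
open MeasureTheory ProbabilityTheory Real
open scoped NNReal ENNReal

/-- The `1/4`-Hölder seminorm of a path `g : ℝ → ℝ` over the interval `[0,1]`:
`sup_{0 ≤ s < t ≤ 1} |g(t) - g(s)| / (t-s)^{1/4}`. -/
noncomputable def quarterHolderSeminorm (g : ℝ → ℝ) : ℝ :=
  ⨆ p : {p : ℝ × ℝ // 0 ≤ p.1 ∧ p.1 < p.2 ∧ p.2 ≤ 1},
    |g p.1.2 - g p.1.1| / (p.1.2 - p.1.1) ^ ((1 : ℝ) / 4)

noncomputable def bqhR : ℝ := (2 : ℝ) ^ ((-3 : ℝ)/8)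

lemma bqhR_pos : 0 < bqhR := Real.rpow_pos_of_pos two_pos _

lemma bqhR_lt_one : bqhR < 1 :=
  Real.rpow_lt_one_of_one_lt_of_neg one_lt_two (by norm_num)

lemma bqhR_le : bqhR ≤ 7/8 := by
  have h8 : bqhR ^ (8:ℕ) ≤ (7/8 : ℝ) ^ (8:ℕ) := by
    have : bqhR ^ (8:ℕ) = (1/8 : ℝ) := by
      rw [bqhR, ← Real.rpow_natCast ((2:ℝ) ^ ((-3:ℝ)/8)) 8, ← Real.rpow_mul (by norm_num)]
      push_cast
      rw [show ((-3:ℝ)/8 * 8) = (-3 : ℝ) by ring]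
      rw [Real.rpow_neg (by norm_num), show ((3:ℝ) = ((3:ℕ):ℝ)) by norm_num,
        Real.rpow_natCast]
      norm_num
    rw [this]; norm_num
  exact le_of_pow_le_pow_left₀ (by norm_num) (by norm_num) h8

lemma bqh_geom_sum {r : ℝ} (h0 : 0 ≤ r) (h1 : r < 1) (N : ℕ) :
    ∑ i ∈ Finset.range N, r ^ i ≤ (1 - r)⁻¹ := by
  have hr1 : r ≠ 1 := ne_of_lt h1
  rw [geom_sum_eq hr1]
  have hpos : 0 < 1 - r := by linarith
  have h2 : (r ^ N - 1) / (r - 1) = (1 - r ^ N) / (1 - r) := by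
    rw [← neg_div_neg_eq]; ring_nf
  rw [h2, ← one_div]
  have hN : 0 ≤ r ^ N := pow_nonneg h0 N
  exact div_le_div₀ zero_le_one (by linarith) hpos le_rfl

lemma bqh_pow_le_rpow (m : ℕ) : bqhR ^ m ≤ (2:ℝ) ^ (-(m:ℝ)/4) := by
  rw [bqhR, ← Real.rpow_natCast ((2:ℝ) ^ ((-3:ℝ)/8)) m, ← Real.rpow_mul (by norm_num)]
  apply Real.rpow_le_rpow_left_iff one_lt_two |>.mpr
  have : (0:ℝ) ≤ m := Nat.cast_nonneg m
  nlinarith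

lemma bqh_one_add_le (n : ℕ) : 1 + (n:ℝ)/8 ≤ (2:ℝ) ^ ((n:ℝ)/4) := by
  rw [Real.rpow_def_of_pos two_pos]
  calc 1 + (n:ℝ)/8 ≤ 1 + Real.log 2 * ((n:ℝ)/4) := by
        have h2 : (0.6931471803 : ℝ) < Real.log 2 := Real.log_two_gt_d9
        have : (0:ℝ) ≤ (n:ℝ) := Nat.cast_nonneg n
        nlinarith
    _ ≤ Real.exp (Real.log 2 * ((n:ℝ)/4)) := by
        have := Real.add_one_le_exp (Real.log 2 * ((n:ℝ)/4)); linarith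

lemma bqh_pdf_bound {v : ℝ≥0} (hv : v ≠ 0) {a x : ℝ} (ha : 0 ≤ a) (hx : a < |x|) :
    gaussianPDFReal 0 v x ≤ (Real.sqrt 2 * Real.exp (-a^2/(4*(v:ℝ)))) * gaussianPDFReal 0 (2*v) x := by
  have hvpos : (0:ℝ) < (v:ℝ) := by
    exact_mod_cast pos_iff_ne_zero.mpr hv
  rw [gaussianPDFReal, gaussianPDFReal]
  have hcast : ((2*v : ℝ≥0) : ℝ) = 2 * (v:ℝ) := by push_cast; ring
  rw [hcast]
  have hsqrt : Real.sqrt (2 * π * (2 * (v:ℝ))) = Real.sqrt 2 * Real.sqrt (2 * π * (v:ℝ)) := by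
    rw [← Real.sqrt_mul (by norm_num)]
    ring_nf
  rw [hsqrt]
  have hπ : (0:ℝ) < 2 * π * (v:ℝ) := by positivity
  have hsp : (0:ℝ) < Real.sqrt (2 * π * (v:ℝ)) := Real.sqrt_pos.mpr hπ
  have h2 : (0:ℝ) < Real.sqrt 2 := by positivity
  rw [mul_inv, show (Real.sqrt 2 * Real.exp (-a^2/(4*(v:ℝ)))) * ((Real.sqrt 2)⁻¹ * (Real.sqrt (2*π*(v:ℝ)))⁻¹ * Real.exp (-(x-0)^2/(2*(2*(v:ℝ))))) = (Real.sqrt 2 * (Real.sqrt 2)⁻¹) * ((Real.sqrt (2*π*(v:ℝ)))⁻¹ * (Real.exp (-a^2/(4*(v:ℝ))) * Real.exp (-(x-0)^2/(2*(2*(v:ℝ)))))) from by ring,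
    mul_inv_cancel₀ (ne_of_gt h2), one_mul]
  apply mul_le_mul_of_nonneg_left ?_ (by positivity)
  rw [← Real.exp_add, Real.exp_le_exp]
  have hx2 : a^2 ≤ x^2 := by
    have := abs_nonneg x
    nlinarith [sq_abs x]
  have : (x-0)^2 = x^2 := by ring
  rw [this]
  rw [div_add_div _ _ (by positivity) (by positivity : (2*(2*(v:ℝ))) ≠ 0)]
  rw [div_le_div_iff₀ (by positivity) (by positivity)]
  nlinarith [mul_pos hvpos hvpos, mul_le_mul_of_nonneg_left hx2 (by positivity : (0:ℝ) ≤ (v:ℝ)*(v:ℝ))]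

lemma bqh_gauss_tail {v : ℝ≥0} (hv : v ≠ 0) {a : ℝ} (ha : 0 ≤ a) :
    gaussianReal 0 v {x | a < |x|} ≤ ENNReal.ofReal (2 * Real.exp (-a^2 / (4*(v:ℝ)))) := by
  have h2v : (2*v : ℝ≥0) ≠ 0 := by simp [hv]
  rw [gaussianReal_apply 0 hv]
  have hmono : ∫⁻ x in {x | a < |x|}, gaussianPDF 0 v x
      ≤ ∫⁻ x in {x | a < |x|},
        ENNReal.ofReal (Real.sqrt 2 * Real.exp (-a^2/(4*(v:ℝ)))) * gaussianPDF 0 (2*v) x := by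
    apply setLIntegral_mono (measurable_const.mul (measurable_gaussianPDF 0 (2*v))) ?_
    intro x hx
    simp only [gaussianPDF, Pi.mul_apply]; rw [← ENNReal.ofReal_mul (by positivity)]
    exact ENNReal.ofReal_le_ofReal (bqh_pdf_bound hv ha hx)
  refine hmono.trans ?_
  refine (setLIntegral_le_lintegral _ _).trans ?_
  rw [lintegral_const_mul _ (measurable_gaussianPDF _ _), lintegral_gaussianPDF_eq_one 0 h2v,
    mul_one]
  apply ENNReal.ofReal_le_ofReal
  have : Real.sqrt 2 ≤ 2 := by
    nlinarith [Real.sq_sqrt (by norm_num : (0:ℝ) ≤ 2), Real.sqrt_nonneg 2]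
  have he : (0:ℝ) < Real.exp (-a^2/(4*(v:ℝ))) := Real.exp_pos _
  nlinarith

lemma bqh_grid {g : ℝ → ℝ} {c : ℝ}
    (H : ∀ n k : ℕ, k + 1 ≤ 2^n → |g (((k:ℝ)+1)/2^n) - g ((k:ℝ)/2^n)| ≤ c * bqhR ^ n)
    (n : ℕ) : ∀ (d j : ℕ), j + d ≤ 2^n →
      |g (((j+d:ℕ):ℝ)/2^n) - g ((j:ℝ)/2^n)| ≤ d * (c * bqhR ^ n) := by
  intro d
  induction d with
  | zero => intro j _; simp
  | succ d ih =>
    intro j hj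
    have h1 : j + d ≤ 2^n := by omega
    have h2 : (j + d) + 1 ≤ 2^n := by omega
    have hH := H n (j + d) h2
    calc |g (((j+(d+1):ℕ):ℝ)/2^n) - g ((j:ℝ)/2^n)|
        ≤ |g (((j+(d+1):ℕ):ℝ)/2^n) - g (((j+d:ℕ):ℝ)/2^n)| + |g (((j+d:ℕ):ℝ)/2^n) - g ((j:ℝ)/2^n)| := abs_sub_le _ _ _
      _ ≤ c * bqhR ^ n + d * (c * bqhR ^ n) := by
          apply add_le_add ?_ (ih j h1)
          have : ((j+(d+1):ℕ):ℝ) = ((j+d:ℕ):ℝ) + 1 := by push_cast; ring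
          rw [this]
          exact hH
      _ = (d+1 : ℕ) * (c * bqhR ^ n) := by push_cast; ring

lemma bqh_grid_abs {g : ℝ → ℝ} {c : ℝ} (hc : 0 ≤ c)
    (H : ∀ n k : ℕ, k + 1 ≤ 2^n → |g (((k:ℝ)+1)/2^n) - g ((k:ℝ)/2^n)| ≤ c * bqhR ^ n)
    (n : ℕ) (J L : ℤ) (hJ0 : 0 ≤ J) (hL0 : 0 ≤ L) (hJ : J ≤ 2^n) (hL : L ≤ 2^n)
    (hd1 : J - L ≤ 2) (hd2 : L - J ≤ 2) :
    |g ((L:ℝ)/2^n) - g ((J:ℝ)/2^n)| ≤ 2 * (c * bqhR ^ n) := by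
  have hrc : 0 ≤ c * bqhR ^ n := mul_nonneg hc (le_of_lt (pow_pos bqhR_pos n))
  have h2n : ((2^n : ℕ) : ℤ) = 2^n := by push_cast; ring
  rcases le_total J L with h | h
  · have := bqh_grid H n (L - J).toNat J.toNat (by omega)
    have hc1 : ((J.toNat + (L-J).toNat : ℕ) : ℝ) = (L : ℝ) := by
      have : (J.toNat + (L-J).toNat : ℤ) = L := by omega
      exact_mod_cast congrArg (Int.cast : ℤ → ℝ) this
    have hc2 : ((J.toNat : ℕ) : ℝ) = (J : ℝ) := by
      exact_mod_cast congrArg (Int.cast : ℤ → ℝ) (Int.toNat_of_nonneg hJ0)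
    rw [hc1, hc2] at this
    refine this.trans ?_
    have hle : ((L-J).toNat : ℝ) ≤ 2 := by
      have : ((L-J).toNat : ℤ) ≤ 2 := by omega
      exact_mod_cast this
    nlinarith
  · rw [abs_sub_comm]
    have := bqh_grid H n (J - L).toNat L.toNat (by omega)
    have hc1 : ((L.toNat + (J-L).toNat : ℕ) : ℝ) = (J : ℝ) := by
      have : (L.toNat + (J-L).toNat : ℤ) = J := by omega
      exact_mod_cast congrArg (Int.cast : ℤ → ℝ) this
    have hc2 : ((L.toNat : ℕ) : ℝ) = (L : ℝ) := by
      exact_mod_cast congrArg (Int.cast : ℤ → ℝ) (Int.toNat_of_nonneg hL0)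
    rw [hc1, hc2] at this
    refine this.trans ?_
    have hle : ((J-L).toNat : ℝ) ≤ 2 := by
      have : ((J-L).toNat : ℤ) ≤ 2 := by omega
      exact_mod_cast this
    nlinarith

lemma bqh_sum_bound {c : ℝ} (hc : 0 ≤ c) (m N : ℕ) :
    ∑ i ∈ Finset.range N, (2 * (c * bqhR ^ (m+1+i))) ≤ 16 * (c * bqhR ^ m) := by
  have hR0 : (0:ℝ) < bqhR := bqhR_pos
  have h1 : ∑ i ∈ Finset.range N, (2 * (c * bqhR ^ (m+1+i)))
      = 2 * c * bqhR ^ (m+1) * ∑ i ∈ Finset.range N, bqhR ^ i := by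
    rw [Finset.mul_sum]
    apply Finset.sum_congr rfl
    intro i _
    rw [pow_add]
    ring
  rw [h1]
  have h2 : ∑ i ∈ Finset.range N, bqhR ^ i ≤ (1 - bqhR)⁻¹ :=
    bqh_geom_sum (le_of_lt hR0) bqhR_lt_one N
  have h3 : (1 - bqhR)⁻¹ ≤ 8 := by
    have := bqhR_le
    rw [show (8:ℝ) = (8⁻¹)⁻¹ by norm_num]
    apply inv_anti₀ (by norm_num) (by linarith)
  have h4 : bqhR ^ (m+1) ≤ bqhR ^ m := by
    rw [pow_succ]
    nlinarith [pow_pos hR0 m, bqhR_lt_one]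
  have h5 : (0:ℝ) ≤ ∑ i ∈ Finset.range N, bqhR ^ i :=
    Finset.sum_nonneg fun i _ => le_of_lt (pow_pos hR0 i)
  have h6 : ∑ i ∈ Finset.range N, bqhR ^ i ≤ 8 := h2.trans h3
  have hA : 2 * c * bqhR^(m+1) * (∑ i ∈ Finset.range N, bqhR ^ i) ≤ 2 * c * bqhR^(m+1) * 8 :=
    mul_le_mul_of_nonneg_left h6 (by positivity)
  have hB : c * bqhR^(m+1) ≤ c * bqhR^m := mul_le_mul_of_nonneg_left h4 hc
  linarith

lemma bqh_chain_ceil {g : ℝ → ℝ} {c : ℝ} (hg : ContinuousOn g (Set.Icc 0 1)) (hc : 0 ≤ c)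
    (H : ∀ n k : ℕ, k + 1 ≤ 2^n → |g (((k:ℝ)+1)/2^n) - g ((k:ℝ)/2^n)| ≤ c * bqhR ^ n)
    {s : ℝ} (hs0 : 0 ≤ s) (hs1 : s ≤ 1) (m : ℕ) :
    |g s - g (((⌈(2:ℝ)^m * s⌉ : ℤ) : ℝ)/2^m)| ≤ 16 * (c * bqhR ^ m) := by
  set a : ℕ → ℝ := fun n => ((⌈(2:ℝ)^n * s⌉ : ℤ) : ℝ)/2^n with ha_def
  have hpow : ∀ n : ℕ, (0:ℝ) < 2^n := fun n => pow_pos two_pos n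
  have haz : ∀ n, (0:ℤ) ≤ ⌈(2:ℝ)^n * s⌉ := fun n => Int.ceil_nonneg (by positivity)
  have hale : ∀ n, ⌈(2:ℝ)^n * s⌉ ≤ 2^n := by
    intro n
    apply Int.ceil_le.mpr
    push_cast
    nlinarith [hpow n]
  have has : ∀ n, s ≤ a n := by
    intro n
    rw [ha_def]
    simp only
    rw [le_div_iff₀ (hpow n)]
    calc s * 2^n = 2^n * s := by ring
      _ ≤ _ := Int.le_ceil _
  have halt : ∀ n, a n < s + (1/2)^n := by
    intro n
    rw [ha_def]
    simp only
    rw [div_lt_iff₀ (hpow n)]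
    calc ((⌈(2:ℝ)^n * s⌉ : ℤ) : ℝ) < 2^n * s + 1 := Int.ceil_lt_add_one _
      _ = (s + (1/2)^n) * 2^n := by
          field_simp
          have h12 : ((1:ℝ)/2)^n * 2^n = 1 := by rw [← mul_pow]; norm_num
          linarith
  have hmem : ∀ n, a n ∈ Set.Icc (0:ℝ) 1 := by
    intro n
    refine ⟨hs0.trans (has n), ?_⟩
    rw [ha_def]
    simp only
    rw [div_le_one (hpow n)]
    calc ((⌈(2:ℝ)^n * s⌉ : ℤ) : ℝ) ≤ ((2^n : ℤ) : ℝ) := by exact_mod_cast hale n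
      _ = 2^n := by push_cast; ring
  have hcons : ∀ n, |g (a (n+1)) - g (a n)| ≤ 2 * (c * bqhR ^ (n+1)) := by
    intro n
    have hJrw : a n = ((2 * ⌈(2:ℝ)^n * s⌉ : ℤ) : ℝ) / 2^(n+1) := by
      rw [ha_def]
      simp only
      push_cast
      rw [pow_succ]
      field_simp
    have hL1 : ⌈(2:ℝ)^(n+1) * s⌉ ≤ 2 * ⌈(2:ℝ)^n * s⌉ := by
      apply Int.ceil_le.mpr
      push_cast
      have := Int.le_ceil ((2:ℝ)^n * s)
      rw [pow_succ]
      nlinarith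
    have hd1 : 2 * ⌈(2:ℝ)^n * s⌉ - ⌈(2:ℝ)^(n+1) * s⌉ ≤ 2 := by
      have h1 : ((2 * ⌈(2:ℝ)^n * s⌉ : ℤ) : ℝ) < ((⌈(2:ℝ)^(n+1) * s⌉ : ℤ) : ℝ) + 2 := by
        push_cast
        have ha := Int.ceil_lt_add_one ((2:ℝ)^n * s)
        have hb' : 2 * ((2:ℝ)^n * s) ≤ ((⌈(2:ℝ)^(n+1) * s⌉ : ℤ) : ℝ) := by
          calc 2 * ((2:ℝ)^n * s) = 2^(n+1) * s := by ring
            _ ≤ _ := Int.le_ceil _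
        linarith
      have : (2 * ⌈(2:ℝ)^n * s⌉ : ℤ) < ⌈(2:ℝ)^(n+1) * s⌉ + 2 := by exact_mod_cast h1
      omega
    have h2n : ((2:ℤ)^(n+1)) = 2 * 2^n := by ring
    rw [hJrw, ha_def]
    simp only
    exact bqh_grid_abs hc H (n+1) (2 * ⌈(2:ℝ)^n * s⌉) (⌈(2:ℝ)^(n+1) * s⌉)
      (by have := haz n; omega) (haz (n+1)) (by have := hale n; omega) (hale (n+1))
      hd1 (by omega)
  have hpartial : ∀ N, |g (a (m+N)) - g (a m)| ≤ ∑ i ∈ Finset.range N, (2 * (c * bqhR ^ (m+1+i))) := by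
    intro N
    induction N with
    | zero => simp
    | succ N ih =>
      rw [Finset.sum_range_succ]
      calc |g (a (m+(N+1))) - g (a m)|
          ≤ |g (a (m+N+1)) - g (a (m+N))| + |g (a (m+N)) - g (a m)| := by
            rw [show m+(N+1) = m+N+1 from by omega]
            exact abs_sub_le _ _ _
        _ ≤ 2 * (c * bqhR ^ (m+N+1)) + ∑ i ∈ Finset.range N, (2 * (c * bqhR ^ (m+1+i))) :=
            add_le_add (hcons (m+N)) ih
        _ = ∑ i ∈ Finset.range N, (2 * (c * bqhR ^ (m+1+i))) + 2 * (c * bqhR ^ (m+1+N)) := by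
            rw [show m+1+N = m+N+1 from by omega]
            ring
  have hbound : ∀ N, |g (a (m+N)) - g (a m)| ≤ 16 * (c * bqhR ^ m) :=
    fun N => (hpartial N).trans (bqh_sum_bound hc m N)
  have htendsa : Filter.Tendsto a Filter.atTop (nhds s) := by
    have hup : Filter.Tendsto (fun n : ℕ => s + (1/2:ℝ)^n) Filter.atTop (nhds s) := by
      have h0 : Filter.Tendsto (fun n : ℕ => (1/2:ℝ)^n) Filter.atTop (nhds 0) :=
        tendsto_pow_atTop_nhds_zero_of_lt_one (by norm_num) (by norm_num)
      have h2 : Filter.Tendsto (fun n : ℕ => s + (1/2:ℝ)^n) Filter.atTop (nhds (s + 0)) :=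
        Filter.Tendsto.add tendsto_const_nhds h0
      simpa using h2
    exact tendsto_of_tendsto_of_tendsto_of_le_of_le tendsto_const_nhds hup
      (fun n => has n) (fun n => (halt n).le)
  have htends : Filter.Tendsto (fun N => g (a (m+N))) Filter.atTop (nhds (g s)) := by
    have h1 : Filter.Tendsto (fun N => a (m+N)) Filter.atTop (nhdsWithin s (Set.Icc 0 1)) := by
      apply tendsto_nhdsWithin_of_tendsto_nhds_of_eventually_within
      · exact htendsa.comp (Filter.tendsto_atTop_mono (fun N => Nat.le_add_left N m)
          Filter.tendsto_id)
      · exact Filter.Eventually.of_forall (fun N => hmem (m+N))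
    exact ((hg s ⟨hs0, hs1⟩).tendsto).comp h1
  have habslim : Filter.Tendsto (fun N => |g (a (m+N)) - g (a m)|) Filter.atTop
      (nhds (|g s - g (a m)|)) := ((htends.sub tendsto_const_nhds).abs)
  exact le_of_tendsto habslim (Filter.Eventually.of_forall hbound)

lemma bqh_chain_floor {g : ℝ → ℝ} {c : ℝ} (hg : ContinuousOn g (Set.Icc 0 1)) (hc : 0 ≤ c)
    (H : ∀ n k : ℕ, k + 1 ≤ 2^n → |g (((k:ℝ)+1)/2^n) - g ((k:ℝ)/2^n)| ≤ c * bqhR ^ n)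
    {t : ℝ} (ht0 : 0 ≤ t) (ht1 : t ≤ 1) (m : ℕ) :
    |g t - g (((⌊(2:ℝ)^m * t⌋ : ℤ) : ℝ)/2^m)| ≤ 16 * (c * bqhR ^ m) := by
  set b : ℕ → ℝ := fun n => ((⌊(2:ℝ)^n * t⌋ : ℤ) : ℝ)/2^n with hb_def
  have hpow : ∀ n : ℕ, (0:ℝ) < 2^n := fun n => pow_pos two_pos n
  have hbz : ∀ n, (0:ℤ) ≤ ⌊(2:ℝ)^n * t⌋ := fun n => Int.floor_nonneg.mpr (by positivity)
  have hble : ∀ n, ⌊(2:ℝ)^n * t⌋ ≤ 2^n := by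
    intro n
    have h1 : ((⌊(2:ℝ)^n * t⌋ : ℤ) : ℝ) ≤ ((2^n : ℤ) : ℝ) := by
      calc ((⌊(2:ℝ)^n * t⌋ : ℤ) : ℝ) ≤ (2:ℝ)^n * t := Int.floor_le _
        _ ≤ ((2^n : ℤ) : ℝ) := by push_cast; nlinarith [hpow n]
    exact_mod_cast h1
  have hbs : ∀ n, b n ≤ t := by
    intro n
    rw [hb_def]
    simp only
    rw [div_le_iff₀ (hpow n)]
    calc ((⌊(2:ℝ)^n * t⌋ : ℤ) : ℝ) ≤ 2^n * t := Int.floor_le _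
      _ = t * 2^n := by ring
  have hblt : ∀ n, t - (1/2)^n < b n := by
    intro n
    rw [hb_def]
    simp only
    rw [lt_div_iff₀ (hpow n)]
    have := Int.lt_floor_add_one ((2:ℝ)^n * t)
    have h2 : (t - (1/2)^n) * 2^n = 2^n * t - 1 := by
      field_simp
      have h12 : ((1:ℝ)/2)^n * 2^n = 1 := by rw [← mul_pow]; norm_num
      linarith
    rw [h2]
    linarith
  have hmem : ∀ n, b n ∈ Set.Icc (0:ℝ) 1 := by
    intro n
    constructor
    · rw [hb_def]
      simp only
      apply div_nonneg _ (le_of_lt (hpow n))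
      exact_mod_cast hbz n
    · exact (hbs n).trans ht1
  have hcons : ∀ n, |g (b (n+1)) - g (b n)| ≤ 2 * (c * bqhR ^ (n+1)) := by
    intro n
    have hJrw : b n = ((2 * ⌊(2:ℝ)^n * t⌋ : ℤ) : ℝ) / 2^(n+1) := by
      rw [hb_def]
      simp only
      push_cast
      rw [pow_succ]
      field_simp
    have hL1 : 2 * ⌊(2:ℝ)^n * t⌋ ≤ ⌊(2:ℝ)^(n+1) * t⌋ := by
      apply Int.le_floor.mpr
      push_cast
      have := Int.floor_le ((2:ℝ)^n * t)
      calc ((2:ℝ) * (⌊(2:ℝ)^n * t⌋:ℤ)) ≤ 2 * (2^n * t) := by linarith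
        _ = 2^(n+1) * t := by ring
    have hd2 : ⌊(2:ℝ)^(n+1) * t⌋ - 2 * ⌊(2:ℝ)^n * t⌋ ≤ 2 := by
      have h1 : ((⌊(2:ℝ)^(n+1) * t⌋ : ℤ) : ℝ) < ((2 * ⌊(2:ℝ)^n * t⌋ : ℤ) : ℝ) + 2 := by
        push_cast
        have ha := Int.lt_floor_add_one ((2:ℝ)^n * t)
        have hb' : ((⌊(2:ℝ)^(n+1) * t⌋ : ℤ) : ℝ) ≤ 2 * ((2:ℝ)^n * t) := by
          calc ((⌊(2:ℝ)^(n+1) * t⌋ : ℤ) : ℝ) ≤ 2^(n+1) * t := Int.floor_le _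
            _ = 2 * ((2:ℝ)^n * t) := by ring
        linarith
      have : (⌊(2:ℝ)^(n+1) * t⌋ : ℤ) < 2 * ⌊(2:ℝ)^n * t⌋ + 2 := by exact_mod_cast h1
      omega
    rw [hJrw, hb_def]
    simp only
    exact bqh_grid_abs hc H (n+1) (2 * ⌊(2:ℝ)^n * t⌋) (⌊(2:ℝ)^(n+1) * t⌋)
      (by have := hbz n; omega) (hbz (n+1)) (by have := hble n; omega) (hble (n+1))
      (by omega) hd2
  have hpartial : ∀ N, |g (b (m+N)) - g (b m)| ≤ ∑ i ∈ Finset.range N, (2 * (c * bqhR ^ (m+1+i))) := by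
    intro N
    induction N with
    | zero => simp
    | succ N ih =>
      rw [Finset.sum_range_succ]
      calc |g (b (m+(N+1))) - g (b m)|
          ≤ |g (b (m+N+1)) - g (b (m+N))| + |g (b (m+N)) - g (b m)| := by
            rw [show m+(N+1) = m+N+1 from by omega]
            exact abs_sub_le _ _ _
        _ ≤ 2 * (c * bqhR ^ (m+N+1)) + ∑ i ∈ Finset.range N, (2 * (c * bqhR ^ (m+1+i))) :=
            add_le_add (hcons (m+N)) ih
        _ = ∑ i ∈ Finset.range N, (2 * (c * bqhR ^ (m+1+i))) + 2 * (c * bqhR ^ (m+1+N)) := by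
            rw [show m+1+N = m+N+1 from by omega]
            ring
  have hbound : ∀ N, |g (b (m+N)) - g (b m)| ≤ 16 * (c * bqhR ^ m) :=
    fun N => (hpartial N).trans (bqh_sum_bound hc m N)
  have htendsb : Filter.Tendsto b Filter.atTop (nhds t) := by
    have hlow : Filter.Tendsto (fun n : ℕ => t - (1/2:ℝ)^n) Filter.atTop (nhds t) := by
      have h0 : Filter.Tendsto (fun n : ℕ => (1/2:ℝ)^n) Filter.atTop (nhds 0) :=
        tendsto_pow_atTop_nhds_zero_of_lt_one (by norm_num) (by norm_num)
      have h2 : Filter.Tendsto (fun n : ℕ => t - (1/2:ℝ)^n) Filter.atTop (nhds (t - 0)) :=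
        Filter.Tendsto.sub tendsto_const_nhds h0
      simpa using h2
    exact tendsto_of_tendsto_of_tendsto_of_le_of_le hlow tendsto_const_nhds
      (fun n => (hblt n).le) (fun n => hbs n)
  have htends : Filter.Tendsto (fun N => g (b (m+N))) Filter.atTop (nhds (g t)) := by
    have h1 : Filter.Tendsto (fun N => b (m+N)) Filter.atTop (nhdsWithin t (Set.Icc 0 1)) := by
      apply tendsto_nhdsWithin_of_tendsto_nhds_of_eventually_within
      · exact htendsb.comp (Filter.tendsto_atTop_mono (fun N => Nat.le_add_left N m)
          Filter.tendsto_id)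
      · exact Filter.Eventually.of_forall (fun N => hmem (m+N))
    exact ((hg t ⟨ht0, ht1⟩).tendsto).comp h1
  have habslim : Filter.Tendsto (fun N => |g (b (m+N)) - g (b m)|) Filter.atTop
      (nhds (|g t - g (b m)|)) := ((htends.sub tendsto_const_nhds).abs)
  exact le_of_tendsto habslim (Filter.Eventually.of_forall hbound)

lemma bqh_half_pow_rpow (k : ℕ) : ((1/2:ℝ)^k) ^ ((1:ℝ)/4) = (2:ℝ) ^ (-(k:ℝ)/4) := by
  have h1 : ((1/2:ℝ)^k) = (2:ℝ) ^ (-(k:ℝ)) := by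
    rw [Real.rpow_neg (le_of_lt two_pos), Real.rpow_natCast, div_pow, one_pow, one_div]
  rw [h1, ← Real.rpow_mul (le_of_lt two_pos)]
  congr 1
  ring

lemma bqh_chaining {g : ℝ → ℝ} {c : ℝ} (hg : ContinuousOn g (Set.Icc 0 1)) (hc : 0 ≤ c)
    (H : ∀ n k : ℕ, k + 1 ≤ 2^n → |g (((k:ℝ)+1)/2^n) - g ((k:ℝ)/2^n)| ≤ c * bqhR ^ n)
    {s t : ℝ} (hs : 0 ≤ s) (hst : s < t) (ht : t ≤ 1) :
    |g t - g s| ≤ 96 * c * (t - s) ^ ((1:ℝ)/4) := by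
  have hts : 0 < t - s := by linarith
  have hex : ∃ n : ℕ, (1/2:ℝ)^(n+1) < t - s := by
    obtain ⟨n, hn⟩ := exists_pow_lt_of_lt_one hts (by norm_num : (1/2:ℝ) < 1)
    refine ⟨n, lt_of_le_of_lt ?_ hn⟩
    exact pow_le_pow_of_le_one (by norm_num) (by norm_num) (by omega)
  classical
  set m := Nat.find hex with hm_def
  have hm1 : (1/2:ℝ)^(m+1) < t - s := Nat.find_spec hex
  have hm2 : t - s ≤ (1/2:ℝ)^m := by
    rcases Nat.eq_zero_or_pos m with h0 | hpos
    · rw [h0]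
      simp
      linarith
    · have := Nat.find_min hex (show m - 1 < m from by omega)
      rw [show m - 1 + 1 = m from by omega] at this
      linarith [not_lt.mp this]
  have hpow : (0:ℝ) < 2^m := pow_pos two_pos m
  set J : ℤ := ⌈(2:ℝ)^m * s⌉ with hJ_def
  set L : ℤ := ⌊(2:ℝ)^m * t⌋ with hL_def
  have hs1 : s ≤ 1 := le_of_lt (lt_of_lt_of_le hst ht)
  have ht0 : 0 ≤ t := le_trans hs (le_of_lt hst)
  -- the three pieces
  have hA := bqh_chain_ceil hg hc H hs hs1 m
  have hB := bqh_chain_floor hg hc H ht0 ht m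
  have hJ0 : (0:ℤ) ≤ J := Int.ceil_nonneg (by positivity)
  have hL0 : (0:ℤ) ≤ L := Int.floor_nonneg.mpr (by positivity)
  have hJle : J ≤ 2^m := by
    rw [hJ_def]
    apply Int.ceil_le.mpr
    push_cast
    nlinarith
  have hLle : L ≤ 2^m := by
    have h1 : ((L:ℤ):ℝ) ≤ ((2^m:ℤ):ℝ) := by
      rw [hL_def]
      calc ((⌊(2:ℝ)^m * t⌋ : ℤ):ℝ) ≤ (2:ℝ)^m * t := Int.floor_le _
        _ ≤ ((2^m:ℤ):ℝ) := by push_cast; nlinarith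
    exact_mod_cast h1
  have hJr : ((J:ℤ):ℝ) < (2:ℝ)^m * s + 1 := Int.ceil_lt_add_one _
  have hJr2 : (2:ℝ)^m * s ≤ ((J:ℤ):ℝ) := Int.le_ceil _
  have hLr : ((L:ℤ):ℝ) ≤ (2:ℝ)^m * t := Int.floor_le _
  have hLr2 : (2:ℝ)^m * t - 1 < ((L:ℤ):ℝ) := by
    have := Int.lt_floor_add_one ((2:ℝ)^m * t)
    linarith
  have h2m : (2:ℝ)^m * (1/2:ℝ)^m = 1 := by
    rw [← mul_pow]
    norm_num
  have hd1 : J - L ≤ 2 := by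
    have h1 : ((J:ℤ):ℝ) < ((L:ℤ):ℝ) + 2 := by nlinarith
    have : (J:ℤ) < L + 2 := by exact_mod_cast h1
    omega
  have hd2 : L - J ≤ 2 := by
    have hmul : (2:ℝ)^m * (t - s) ≤ (2:ℝ)^m * (1/2:ℝ)^m :=
      mul_le_mul_of_nonneg_left hm2 (le_of_lt hpow)
    have h1 : ((L:ℤ):ℝ) < ((J:ℤ):ℝ) + 2 := by nlinarith
    have : (L:ℤ) < J + 2 := by exact_mod_cast h1
    omega
  have hmid : |g ((L:ℝ)/2^m) - g ((J:ℝ)/2^m)| ≤ 2 * (c * bqhR ^ m) :=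
    bqh_grid_abs hc H m J L hJ0 hL0 hJle hLle hd1 hd2
  have htotal : |g t - g s| ≤ 34 * (c * bqhR ^ m) := by
    have h1 : |g t - g s| ≤ |g t - g ((L:ℝ)/2^m)| + |g ((L:ℝ)/2^m) - g ((J:ℝ)/2^m)|
        + |g ((J:ℝ)/2^m) - g s| := by
      calc |g t - g s| ≤ |g t - g ((J:ℝ)/2^m)| + |g ((J:ℝ)/2^m) - g s| := abs_sub_le _ _ _
        _ ≤ (|g t - g ((L:ℝ)/2^m)| + |g ((L:ℝ)/2^m) - g ((J:ℝ)/2^m)|) + |g ((J:ℝ)/2^m) - g s| := by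
            have := abs_sub_le (g t) (g ((L:ℝ)/2^m)) (g ((J:ℝ)/2^m))
            linarith
    have h2 : |g ((J:ℝ)/2^m) - g s| ≤ 16 * (c * bqhR ^ m) := by
      rw [abs_sub_comm]
      exact hA
    linarith [hB, hmid]
  have hr4 : bqhR ^ m ≤ 2 * (t - s) ^ ((1:ℝ)/4) := by
    have hq := bqh_pow_le_rpow m
    have heq : (2:ℝ)^(-(m:ℝ)/4) = (2:ℝ)^((1:ℝ)/4) * ((1/2:ℝ)^(m+1))^((1:ℝ)/4) := by
      rw [bqh_half_pow_rpow (m+1), ← Real.rpow_add two_pos]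
      congr 1
      push_cast
      ring
    have hle : ((1/2:ℝ)^(m+1))^((1:ℝ)/4) ≤ (t-s)^((1:ℝ)/4) :=
      Real.rpow_le_rpow (by positivity) hm1.le (by norm_num)
    have h2q : (2:ℝ)^((1:ℝ)/4) ≤ 2 := by
      calc (2:ℝ)^((1:ℝ)/4) ≤ (2:ℝ)^(1:ℝ) :=
          Real.rpow_le_rpow_of_exponent_le one_le_two (by norm_num)
        _ = 2 := Real.rpow_one 2
    calc bqhR ^ m ≤ (2:ℝ)^(-(m:ℝ)/4) := hq
      _ = (2:ℝ)^((1:ℝ)/4) * ((1/2:ℝ)^(m+1))^((1:ℝ)/4) := heq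
      _ ≤ 2 * (t-s)^((1:ℝ)/4) := by
          apply mul_le_mul h2q hle (by positivity) (by norm_num)
  have hrpos : (0:ℝ) ≤ (t - s) ^ ((1:ℝ)/4) := Real.rpow_nonneg (le_of_lt hts) _
  calc |g t - g s| ≤ 34 * (c * bqhR ^ m) := htotal
    _ ≤ 34 * (c * (2 * (t-s)^((1:ℝ)/4))) := by
        apply mul_le_mul_of_nonneg_left (mul_le_mul_of_nonneg_left hr4 hc) (by norm_num)
    _ ≤ 96 * c * (t - s) ^ ((1:ℝ)/4) := by nlinarith [mul_nonneg hc hrpos]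

lemma bqh_exp_eq (n : ℕ) (c : ℝ) :
    (c * bqhR^n)^2 / (4 * ((1/2:ℝ)^n)) = c^2 * (2:ℝ)^((n:ℝ)/4) / 4 := by
  have hb : bqhR^n = (2:ℝ)^(-(3*(n:ℝ))/8) := by
    rw [bqhR, ← Real.rpow_natCast ((2:ℝ) ^ ((-3:ℝ)/8)) n, ← Real.rpow_mul (by norm_num)]
    congr 1
    ring
  have hhalf : ((1/2:ℝ)^n) = (2:ℝ)^(-(n:ℝ)) := by
    rw [Real.rpow_neg (le_of_lt two_pos), Real.rpow_natCast, div_pow, one_pow, one_div]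
  have hsq : (bqhR^n)^2 = (2:ℝ)^(-(3*(n:ℝ))/4) := by
    rw [hb, ← Real.rpow_natCast ((2:ℝ)^(-(3*(n:ℝ))/8)) 2, ← Real.rpow_mul (by norm_num)]
    congr 1
    push_cast
    ring
  have hkey : (2:ℝ)^(-(3*(n:ℝ))/4) = (2:ℝ)^((n:ℝ)/4) * (2:ℝ)^(-(n:ℝ)) := by
    rw [← Real.rpow_add two_pos]
    congr 1
    ring
  have hpos : (0:ℝ) < (2:ℝ)^(-(n:ℝ)) := Real.rpow_pos_of_pos two_pos _
  rw [mul_pow, hsq, hkey, hhalf]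
  field_simp


lemma bqh_seminorm_nonneg (g : ℝ → ℝ) : 0 ≤ quarterHolderSeminorm g := by
  apply Real.iSup_nonneg
  rintro ⟨⟨s, t⟩, hs, hst, ht⟩
  have : (0:ℝ) < (t - s) ^ ((1:ℝ)/4) := Real.rpow_pos_of_pos (by linarith) _
  positivity

lemma bqh_seminorm_le {g : ℝ → ℝ} {lam : ℝ} (hlam : 0 ≤ lam)
    (h : ∀ s t : ℝ, 0 ≤ s → s < t → t ≤ 1 → |g t - g s| ≤ lam * (t - s) ^ ((1:ℝ)/4)) :
    quarterHolderSeminorm g ≤ lam := by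
  apply Real.iSup_le ?_ hlam
  rintro ⟨⟨s, t⟩, hs, hst, ht⟩
  simp only
  rw [div_le_iff₀ (Real.rpow_pos_of_pos (by linarith) _)]
  exact h s t hs hst ht

lemma bqh_key {Ω : Type*} [MeasurableSpace Ω]
    (P : Measure Ω) [IsProbabilityMeasure P] (B : ℝ → Ω → ℝ)
    (hmeas : ∀ t : ℝ, Measurable (B t))
    (hcont : ∀ᵐ ω ∂P, ContinuousOn (fun t => B t ω) (Set.Icc 0 1))
    (hgauss : ∀ s t : ℝ, 0 ≤ s → s ≤ t → t ≤ 1 →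
      P.map (fun ω => B t ω - B s ω)
        = ProbabilityTheory.gaussianReal 0 (Real.toNNReal (t - s)))
    {lam : ℝ} (hlam : 0 < lam) :
    ∃ U : Set Ω, MeasurableSet U ∧
      {ω | lam < quarterHolderSeminorm fun t => B t ω} ⊆ U ∧
      P U ≤ ENNReal.ofReal ((4 * Real.exp 16) * Real.exp (-lam^2/(2*18432))) := by
  classical
  set c : ℝ := lam / 96 with hc_def
  have hc0 : 0 < c := by positivity
  -- single-increment events
  set E : ℕ → ℕ → Set Ω := fun n k =>
    {ω | c * bqhR^n < |B (((k:ℝ)+1)/2^n) ω - B ((k:ℝ)/2^n) ω|} with hE_def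
  have hEmeas : ∀ n k, MeasurableSet (E n k) := fun n k =>
    measurableSet_lt measurable_const ((hmeas _).sub (hmeas _)).abs
  set A : ℕ → Set Ω := fun n => ⋃ k ∈ Finset.range (2^n), E n k with hA_def
  have hAmeas : ∀ n, MeasurableSet (A n) := fun n =>
    MeasurableSet.biUnion (Finset.range (2^n)).countable_toSet (fun k _ => hEmeas n k)
  set NC : Set Ω := {ω | ¬ ContinuousOn (fun t => B t ω) (Set.Icc 0 1)} with hNC_def
  have hNC0 : P NC = 0 := by
    rw [hNC_def]
    exact hcont
  set U : Set Ω := toMeasurable P NC ∪ ⋃ n, A n with hU_def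
  refine ⟨U, (measurableSet_toMeasurable P NC).union (MeasurableSet.iUnion hAmeas), ?_, ?_⟩
  · -- inclusion
    intro ω hω
    by_contra hU
    rw [hU_def, Set.mem_union] at hU
    push_neg at hU
    obtain ⟨hω1, hω2⟩ := hU
    have hcontω : ContinuousOn (fun t => B t ω) (Set.Icc 0 1) := by
      by_contra h
      exact hω1 (subset_toMeasurable P NC h)
    have H : ∀ n k : ℕ, k + 1 ≤ 2^n →
        |B (((k:ℝ)+1)/2^n) ω - B ((k:ℝ)/2^n) ω| ≤ c * bqhR ^ n := by
      intro n k hk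
      rw [Set.mem_iUnion] at hω2
      push_neg at hω2
      have := hω2 n
      rw [hA_def] at this
      simp only [Set.mem_iUnion, not_exists] at this
      have h2 := this k (Finset.mem_range.mpr (by omega))
      rw [hE_def] at h2
      simpa using not_lt.mp h2
    have hSle : quarterHolderSeminorm (fun t => B t ω) ≤ lam := by
      apply bqh_seminorm_le hlam.le
      intro s t hs hst ht
      have := bqh_chaining hcontω hc0.le H hs hst ht
      calc |B t ω - B s ω| ≤ 96 * c * (t - s) ^ ((1:ℝ)/4) := this
        _ = lam * (t - s) ^ ((1:ℝ)/4) := by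
            rw [hc_def]
            ring
    exact absurd hω (by simp only [Set.mem_setOf_eq]; linarith)
  · -- measure bound
    have hEb : ∀ n k : ℕ, k + 1 ≤ 2^n →
        P (E n k) ≤ ENNReal.ofReal (2 * Real.exp (-(c^2 * (2:ℝ)^((n:ℝ)/4))/4)) := by
      intro n k hk
      have hpow : (0:ℝ) < 2^n := pow_pos two_pos n
      set t1 : ℝ := (k:ℝ)/2^n with ht1
      set t2 : ℝ := ((k:ℝ)+1)/2^n with ht2
      have h01 : 0 ≤ t1 := by positivity
      have h12 : t1 ≤ t2 := by
        rw [ht1, ht2]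
        gcongr
        linarith
      have h21 : t2 ≤ 1 := by
        rw [ht2, div_le_one hpow]
        have : ((k:ℝ)+1) ≤ ((2^n : ℕ):ℝ) := by exact_mod_cast hk
        calc (k:ℝ)+1 ≤ ((2^n : ℕ):ℝ) := this
          _ = 2^n := by push_cast; ring
      have hdiff : t2 - t1 = (1/2:ℝ)^n := by
        rw [ht1, ht2, div_pow, one_pow, div_sub_div_same]
        congr 1
        ring
      have hvpos : (0:ℝ) < t2 - t1 := by
        rw [hdiff]
        positivity
      have hv : (t2 - t1).toNNReal ≠ 0 := (Real.toNNReal_pos.mpr hvpos).ne'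
      have hXmeas : Measurable (fun ω => B t2 ω - B t1 ω) := (hmeas _).sub (hmeas _)
      have hsetmeas : MeasurableSet {x : ℝ | c * bqhR^n < |x|} :=
        measurableSet_lt measurable_const (continuous_abs.measurable)
      have hPE : P (E n k) = (P.map (fun ω => B t2 ω - B t1 ω)) {x : ℝ | c * bqhR^n < |x|} := by
        rw [Measure.map_apply hXmeas hsetmeas]
        rfl
      rw [hPE, hgauss t1 t2 h01 h12 h21]
      have ha : 0 ≤ c * bqhR^n := mul_nonneg hc0.le (le_of_lt (pow_pos bqhR_pos n))
      refine (bqh_gauss_tail hv ha).trans ?_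
      apply ENNReal.ofReal_le_ofReal
      have hcoe : ((t2 - t1).toNNReal : ℝ) = (1/2:ℝ)^n := by
        rw [Real.coe_toNNReal _ hvpos.le, hdiff]
      rw [hcoe]
      have : (c * bqhR^n)^2 / (4 * ((1/2:ℝ)^n)) = c^2 * (2:ℝ)^((n:ℝ)/4) / 4 := bqh_exp_eq n c
      rw [show -(c * bqhR^n)^2 / (4 * ((1/2:ℝ)^n)) = -((c * bqhR^n)^2 / (4 * ((1/2:ℝ)^n))) from by ring,
        this]
      apply mul_le_mul_of_nonneg_left _ (by norm_num : (0:ℝ) ≤ 2)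
      apply Real.exp_le_exp.mpr
      apply le_of_eq
      ring
    have hAb : ∀ n : ℕ, P (A n)
        ≤ ENNReal.ofReal ((2:ℝ)^n * (2 * Real.exp (-(c^2 * (2:ℝ)^((n:ℝ)/4))/4))) := by
      intro n
      rw [hA_def]
      refine (measure_biUnion_finset_le _ _).trans ?_
      have hcard : ∀ k ∈ Finset.range (2^n), P (E n k)
          ≤ ENNReal.ofReal (2 * Real.exp (-(c^2 * (2:ℝ)^((n:ℝ)/4))/4)) := by
        intro k hkr
        exact hEb n k (by simpa using Finset.mem_range.mp hkr)
      refine (Finset.sum_le_card_nsmul _ _ _ hcard).trans ?_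
      rw [Finset.card_range, nsmul_eq_mul]
      rw [show (((2^n : ℕ)):ℝ≥0∞) = ENNReal.ofReal (((2^n : ℕ):ℝ)) from (ENNReal.ofReal_natCast _).symm,
        ← ENNReal.ofReal_mul (by positivity)]
      apply ENNReal.ofReal_le_ofReal
      apply le_of_eq
      push_cast
      ring
    have hPU : P U ≤ ∑' n, P (A n) := by
      rw [hU_def]
      refine (measure_union_le _ _).trans ?_
      rw [measure_toMeasurable, hNC0, zero_add]
      exact measure_iUnion_le _
    rcases le_or_gt 64 (c^2) with hbig | hsmall
    · -- large lambda case
      have hterm : ∀ n : ℕ, (2:ℝ)^n * (2 * Real.exp (-(c^2 * (2:ℝ)^((n:ℝ)/4))/4))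
          ≤ (4 * Real.exp (-c^2/4)) * (1/2:ℝ)^n := by
        intro n
        have h1 : -(c^2 * (2:ℝ)^((n:ℝ)/4))/4 ≤ -c^2/4 + (-(2:ℝ)*n) := by
          have h2 := bqh_one_add_le n
          have hc2 : (0:ℝ) ≤ c^2 := sq_nonneg c
          have h3 : c^2 * (1 + (n:ℝ)/8) ≤ c^2 * (2:ℝ)^((n:ℝ)/4) :=
            mul_le_mul_of_nonneg_left h2 hc2
          have h4 : (2:ℝ)*n ≤ c^2 * ((n:ℝ)/8) / 4 := by
            have : (0:ℝ) ≤ (n:ℝ) := Nat.cast_nonneg n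
            nlinarith
          nlinarith
        have h5 : Real.exp (-(c^2 * (2:ℝ)^((n:ℝ)/4))/4)
            ≤ Real.exp (-c^2/4) * Real.exp (-(2:ℝ)*n) := by
          rw [← Real.exp_add]
          exact Real.exp_le_exp.mpr h1
        have h6 : Real.exp (-(2:ℝ)*n) ≤ (1/4:ℝ)^n := by
          have he2 : (2:ℝ) ≤ Real.exp 1 := by
            have := Real.add_one_le_exp 1
            linarith
          have h7 : Real.exp (-(2:ℝ)*n) = (Real.exp (-2:ℝ))^n := by
            rw [← Real.exp_nat_mul]
            congr 1
            ring
          rw [h7]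
          apply pow_le_pow_left₀ (le_of_lt (Real.exp_pos _))
          have h8 : Real.exp (-2:ℝ) * Real.exp 2 = 1 := by
            rw [← Real.exp_add]
            norm_num
          have h9 : (4:ℝ) ≤ Real.exp 2 := by
            have : Real.exp 2 = Real.exp 1 * Real.exp 1 := by
              rw [← Real.exp_add]
              norm_num
            nlinarith [Real.exp_pos 1]
          have h10 : Real.exp (-2:ℝ) > 0 := Real.exp_pos _
          nlinarith
        have hexp_pos : (0:ℝ) < Real.exp (-c^2/4) := Real.exp_pos _
        calc (2:ℝ)^n * (2 * Real.exp (-(c^2 * (2:ℝ)^((n:ℝ)/4))/4))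
            ≤ (2:ℝ)^n * (2 * (Real.exp (-c^2/4) * (1/4:ℝ)^n)) := by
              apply mul_le_mul_of_nonneg_left _ (by positivity)
              apply mul_le_mul_of_nonneg_left _ (by norm_num)
              calc Real.exp (-(c^2 * (2:ℝ)^((n:ℝ)/4))/4)
                  ≤ Real.exp (-c^2/4) * Real.exp (-(2:ℝ)*n) := h5
                _ ≤ Real.exp (-c^2/4) * (1/4:ℝ)^n :=
                    mul_le_mul_of_nonneg_left h6 hexp_pos.le
          _ = 2 * Real.exp (-c^2/4) * ((2:ℝ)^n * (1/4:ℝ)^n) := by ring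
          _ = 2 * Real.exp (-c^2/4) * (1/2:ℝ)^n := by
              congr 1
              rw [← mul_pow]
              congr 1
              norm_num
          _ ≤ (4 * Real.exp (-c^2/4)) * (1/2:ℝ)^n := by
              have : (0:ℝ) ≤ (1/2:ℝ)^n := by positivity
              nlinarith
      have hsummable : Summable (fun n : ℕ => (4 * Real.exp (-c^2/4)) * (1/2:ℝ)^n) :=
        (summable_geometric_of_lt_one (by norm_num) (by norm_num)).mul_left _
      have htsum : ∑' n : ℕ, ((4 * Real.exp (-c^2/4)) * (1/2:ℝ)^n) = 8 * Real.exp (-c^2/4) := by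
        rw [tsum_mul_left, tsum_geometric_of_lt_one (by norm_num) (by norm_num)]
        norm_num
        ring
      calc P U ≤ ∑' n, P (A n) := hPU
        _ ≤ ∑' n : ℕ, ENNReal.ofReal ((4 * Real.exp (-c^2/4)) * (1/2:ℝ)^n) := by
            apply ENNReal.tsum_le_tsum
            intro n
            exact (hAb n).trans (ENNReal.ofReal_le_ofReal (hterm n))
        _ = ENNReal.ofReal (∑' n : ℕ, ((4 * Real.exp (-c^2/4)) * (1/2:ℝ)^n)) :=
            (ENNReal.ofReal_tsum_of_nonneg (fun n => by positivity) hsummable).symm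
        _ = ENNReal.ofReal (8 * Real.exp (-c^2/4)) := by rw [htsum]
        _ ≤ ENNReal.ofReal ((4 * Real.exp 16) * Real.exp (-lam^2/(2*18432))) := by
            apply ENNReal.ofReal_le_ofReal
            have hexpeq : -c^2/4 = -lam^2/(2*18432) := by
              rw [hc_def]
              ring
            rw [← hexpeq]
            have h17 : (17:ℝ) ≤ Real.exp 16 := by
              have := Real.add_one_le_exp (16:ℝ)
              linarith
            have := Real.exp_pos (-c^2/4)
            nlinarith
    · -- small lambda case
      have h1 : P U ≤ 1 := prob_le_one
      refine h1.trans ?_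
      rw [show (1:ℝ≥0∞) = ENNReal.ofReal 1 from ENNReal.ofReal_one.symm]
      apply ENNReal.ofReal_le_ofReal
      have hexpeq : -lam^2/(2*18432) = -c^2/4 := by
        rw [hc_def]
        ring
      rw [hexpeq]
      have h2 : Real.exp (-16:ℝ) ≤ Real.exp (-c^2/4) := by
        apply Real.exp_le_exp.mpr
        nlinarith
      have h3 : Real.exp 16 * Real.exp (-16:ℝ) = 1 := by
        rw [← Real.exp_add]
        norm_num
      nlinarith [Real.exp_pos (16:ℝ), Real.exp_pos (-c^2/4), Real.exp_pos (-16:ℝ)]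


/-- Gaussian tail bound for the `1/4`-Hölder seminorm of Brownian motion on `[0,1]`
(Borell's inequality), and the resulting finiteness of `E[exp(‖ω*‖)]`.  Brownian motion is
characterized by: `B 0 = 0`, a.s. continuous paths on `[0,1]`, independent increments, and
Gaussian increments `B t - B s ~ N(0, t-s)`. -/
theorem brownian_quarter_holder_tail_bound {Ω : Type*} [MeasurableSpace Ω]
    (P : Measure Ω) [IsProbabilityMeasure P] (B : ℝ → Ω → ℝ)
    (hmeas : ∀ t : ℝ, Measurable (B t))
    (h0 : ∀ ω, B 0 ω = 0)
    (hcont : ∀ᵐ ω ∂P, ContinuousOn (fun t => B t ω) (Set.Icc 0 1))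
    (hindep : ∀ (n : ℕ) (t : Fin (n + 1) → ℝ), Monotone t →
      (∀ i, t i ∈ Set.Icc (0 : ℝ) 1) →
      ProbabilityTheory.iIndepFun
        (fun (i : Fin n) ω => B (t i.succ) ω - B (t i.castSucc) ω) P)
    (hgauss : ∀ s t : ℝ, 0 ≤ s → s ≤ t → t ≤ 1 →
      P.map (fun ω => B t ω - B s ω)
        = ProbabilityTheory.gaussianReal 0 (Real.toNNReal (t - s))) :
    ∃ C₁ C₂ : ℝ, 0 < C₁ ∧ 0 < C₂ ∧
      (∀ lam : ℝ, 0 < lam →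
        P {ω | lam < quarterHolderSeminorm fun t => B t ω}
          ≤ ENNReal.ofReal (C₁ * Real.exp (-lam ^ 2 / (2 * C₂)))) ∧
      (∫⁻ ω, ENNReal.ofReal (Real.exp (quarterHolderSeminorm fun t => B t ω)) ∂P) < ⊤  := by
  classical
  refine ⟨4 * Real.exp 16, 18432, by positivity, by norm_num, ?_, ?_⟩
  · intro lam hlam
    obtain ⟨U, hUm, hUsub, hUP⟩ := bqh_key P B hmeas hcont hgauss hlam
    exact (measure_mono hUsub).trans hUP
  · 
    choose U hUm hUsub hUP using fun m : ℕ =>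
      bqh_key P B hmeas hcont hgauss (show (0:ℝ) < (m:ℝ)+1 by positivity)
    set S : Ω → ℝ := fun ω => quarterHolderSeminorm fun t => B t ω with hS_def
    have hpt : ∀ ω, ENNReal.ofReal (Real.exp (S ω))
        ≤ ENNReal.ofReal (Real.exp 2)
          + ∑' m : ℕ, Set.indicator (U m) (fun _ => ENNReal.ofReal (Real.exp ((m:ℝ)+3))) ω := by
      intro ω
      have hS0 : 0 ≤ S ω := bqh_seminorm_nonneg _
      rcases le_or_gt (S ω) 2 with hle | hgt
      · refine le_trans (ENNReal.ofReal_le_ofReal (Real.exp_le_exp.mpr hle)) ?_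
        exact le_self_add
      · set n₀ : ℕ := ⌊S ω⌋₊ with hn0
        have hn₀2 : 2 ≤ n₀ := Nat.le_floor (by exact_mod_cast hgt.le)
        set m : ℕ := n₀ - 2 with hm
        have hmcast : ((m:ℕ):ℝ) = (n₀:ℝ) - 2 := by
          rw [hm]
          push_cast [Nat.cast_sub hn₀2]
          ring
        have hmem : ω ∈ U m := by
          apply hUsub m
          simp only [Set.mem_setOf_eq]
          have h1 : (n₀:ℝ) ≤ S ω := Nat.floor_le hS0
          rw [hmcast]
          linarith
        have hSlt : S ω < (m:ℝ) + 3 := by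
          have := Nat.lt_floor_add_one (S ω)
          rw [hmcast]
          push_cast at this ⊢
          linarith
        calc ENNReal.ofReal (Real.exp (S ω))
            ≤ ENNReal.ofReal (Real.exp ((m:ℝ)+3)) :=
              ENNReal.ofReal_le_ofReal (Real.exp_le_exp.mpr hSlt.le)
          _ = Set.indicator (U m) (fun _ => ENNReal.ofReal (Real.exp ((m:ℝ)+3))) ω :=
              (Set.indicator_of_mem hmem (fun _ => ENNReal.ofReal (Real.exp ((m:ℝ)+3)))).symm
          _ ≤ ∑' k : ℕ, Set.indicator (U k) (fun _ => ENNReal.ofReal (Real.exp ((k:ℝ)+3))) ω :=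
              ENNReal.le_tsum m
          _ ≤ _ := le_add_self
    calc ∫⁻ ω, ENNReal.ofReal (Real.exp (S ω)) ∂P
        ≤ ∫⁻ ω, (ENNReal.ofReal (Real.exp 2)
            + ∑' m : ℕ, Set.indicator (U m) (fun _ => ENNReal.ofReal (Real.exp ((m:ℝ)+3))) ω) ∂P :=
          lintegral_mono hpt
      _ = ENNReal.ofReal (Real.exp 2)
          + ∫⁻ ω, (∑' m : ℕ, Set.indicator (U m) (fun _ => ENNReal.ofReal (Real.exp ((m:ℝ)+3))) ω) ∂P := by
          rw [lintegral_add_left measurable_const, lintegral_const, measure_univ, mul_one]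
      _ = ENNReal.ofReal (Real.exp 2)
          + ∑' m : ℕ, ∫⁻ ω, Set.indicator (U m) (fun _ => ENNReal.ofReal (Real.exp ((m:ℝ)+3))) ω ∂P := by
          rw [lintegral_tsum (fun m => (measurable_const.indicator (hUm m)).aemeasurable)]
      _ = ENNReal.ofReal (Real.exp 2)
          + ∑' m : ℕ, ENNReal.ofReal (Real.exp ((m:ℝ)+3)) * P (U m) := by
          congr 1
          apply tsum_congr
          intro m
          rw [lintegral_indicator_const (hUm m)]
      _ ≤ ENNReal.ofReal (Real.exp 2)
          + ∑' m : ℕ, ENNReal.ofReal (Real.exp ((m:ℝ)+3)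
              * ((4 * Real.exp 16) * Real.exp (-((m:ℝ)+1)^2/(2*18432)))) := by
          apply add_le_add_right
          apply ENNReal.tsum_le_tsum
          intro m
          rw [ENNReal.ofReal_mul (by positivity)]
          exact mul_le_mul_right (hUP m) _
      _ < ⊤ := by
          apply ENNReal.add_lt_top.mpr
          constructor
          · exact ENNReal.ofReal_lt_top
          · set f : ℕ → ℝ := fun m => Real.exp ((m:ℝ)+3)
              * ((4 * Real.exp 16) * Real.exp (-((m:ℝ)+1)^2/(2*18432))) with hf_def
            have hfpos : ∀ m, 0 < f m := fun m => by rw [hf_def]; positivity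
            have hfs : Summable f := by
              apply summable_of_ratio_norm_eventually_le (r := 1/2) (by norm_num)
              filter_upwards [Filter.eventually_ge_atTop 73728] with m hm
              rw [Real.norm_of_nonneg (hfpos (m+1)).le, Real.norm_of_nonneg (hfpos m).le,
                hf_def]
              simp only
              have hkey : Real.exp (((m:ℝ)+1)+3) * Real.exp (-(((m:ℝ)+1)+1)^2/(2*18432))
                  ≤ 1/2 * (Real.exp ((m:ℝ)+3) * Real.exp (-((m:ℝ)+1)^2/(2*18432))) := by
                rw [← Real.exp_add, ← Real.exp_add]
                have hstep : (((m:ℝ)+1)+3) + (-(((m:ℝ)+1)+1)^2/(2*18432))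
                    = (((m:ℝ)+3) + (-((m:ℝ)+1)^2/(2*18432))) + (1 - (2*(m:ℝ)+3)/36864) := by
                  ring
                rw [hstep, Real.exp_add]
                have hsmall : Real.exp (1 - (2*(m:ℝ)+3)/36864) ≤ 1/2 := by
                  have hmr : (73728:ℝ) ≤ (m:ℝ) := by exact_mod_cast hm
                  have harg : 1 - (2*(m:ℝ)+3)/36864 ≤ -1 := by linarith
                  have he : Real.exp (1 - (2*(m:ℝ)+3)/36864) ≤ Real.exp (-1:ℝ) :=
                    Real.exp_le_exp.mpr harg
                  have h2e : (2:ℝ) ≤ Real.exp 1 := by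
                    have := Real.add_one_le_exp 1
                    linarith
                  have hinv : Real.exp (-1:ℝ) * Real.exp 1 = 1 := by
                    rw [← Real.exp_add]
                    norm_num
                  nlinarith [Real.exp_pos (-1:ℝ)]
                nlinarith [Real.exp_pos (((m:ℝ)+3) + (-((m:ℝ)+1)^2/(2*18432)))]
              push_cast
              nlinarith [Real.exp_pos (16:ℝ), hkey,
                mul_le_mul_of_nonneg_left hkey (by positivity : (0:ℝ) ≤ 4 * Real.exp 16)]
            rw [← ENNReal.ofReal_tsum_of_nonneg (fun m => (hfpos m).le) hfs]
            exact ENNReal.ofReal_lt_top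
end
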